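/- arXiv:2509.03190 — 3 statements merged into one kernel-verified Lean document; each statement's English description precedes it below -/
import Mathlib

section
/- Let G be a graph in H₅ with |S₁| ≥ 2 and |S₂| ≥ 2. Then χ(G) = |S₁| + |S₂| + 1, and for every ℓ > χ(G), between any two ℓ-colorings of G there is a path in R_ℓ(G) recoloring each vertex at most 6 times. -/
open SimpleGraph

/-- A proper coloring of `G` with colors in `Fin ℓ`. -/
def IsProperColoring {V : Type*} (G : SimpleGraph V) (ℓ : ℕ) (f : V → Fin ℓ) : Prop :=
  ∀ ⦃a b : V⦄, G.Adj a b → f a ≠ f b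

/-- A walk in the reconfiguration graph `R_ℓ(G)`: a sequence `c 0, c 1, …, c m` of proper
`ℓ`-colorings of `G` in which consecutive colorings differ on at most one vertex. -/
def IsRecolorSeq {V : Type*} (G : SimpleGraph V) (ℓ m : ℕ) (c : ℕ → V → Fin ℓ) : Prop :=
  (∀ i ≤ m, IsProperColoring G ℓ (c i)) ∧
    ∀ i < m, ∀ a b : V, a ≠ b → c i a ≠ c (i + 1) a → c i b = c (i + 1) b

/-- The number of times the vertex `a` is recolored along the sequence `c 0, …, c m`. -/
def recolorCount {V : Type*} {ℓ : ℕ} (m : ℕ) (c : ℕ → V → Fin ℓ) (a : V) : ℕ :=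
  ((Finset.range m).filter fun i => c i a ≠ c (i + 1) a).card

/-- The cycle `Cₙ` on `Fin n` (for `n ≥ 3`). -/
def cyc (n : ℕ) [NeZero n] : SimpleGraph (Fin n) := SimpleGraph.fromRel fun a b => a + 1 = b

/-- The graph `P₂ + P₃`, the disjoint union of an edge and a path on three vertices. -/
def p2p3 : SimpleGraph (Fin 5) := SimpleGraph.fromRel fun a b =>
  (a = 0 ∧ b = 1) ∨ (a = 2 ∧ b = 3) ∨ (a = 3 ∧ b = 4)

/-- Adjacency in the 6-cycle on `Fin 6` (indices mod 6). -/
def c6adj (i j : Fin 6) : Prop := i + 1 = j ∨ j + 1 = i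

/-- The class `H₅`: six vertices `v 0, …, v 5` inducing a 6-cycle and two disjoint nonempty
cliques `S₁, S₂`, complete to each other, with `S₁` complete to `{v₁,v₂,v₃,v₆}` and `S₂`
complete to `{v₃,v₄,v₅,v₆}`; no other edges. (Here `vᵢ` of the paper is `v (i-1)`.) -/
structure H5Data {V : Type*} (G : SimpleGraph V) where
  v : Fin 6 → V
  S1 : Finset V
  S2 : Finset V
  inj : Function.Injective v
  notin : ∀ i, v i ∉ S1 ∧ v i ∉ S2
  d12 : Disjoint S1 S2
  ne1 : S1.Nonempty
  ne2 : S2.Nonempty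
  cover : ∀ x : V, (x ∈ S1 ∨ x ∈ S2) ∨ ∃ i, x = v i
  adj_iff : ∀ x y : V, G.Adj x y ↔ x ≠ y ∧
    ((∃ i j : Fin 6, x = v i ∧ y = v j ∧ c6adj i j) ∨
     (x ∈ S1 ∧ y ∈ S1) ∨ (x ∈ S2 ∧ y ∈ S2) ∨
     (x ∈ S1 ∧ y ∈ S2) ∨ (x ∈ S2 ∧ y ∈ S1) ∨
     (x ∈ S1 ∧ (y = v 0 ∨ y = v 1 ∨ y = v 2 ∨ y = v 5)) ∨
     (y ∈ S1 ∧ (x = v 0 ∨ x = v 1 ∨ x = v 2 ∨ x = v 5)) ∨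
     (x ∈ S2 ∧ (y = v 2 ∨ y = v 3 ∨ y = v 4 ∨ y = v 5)) ∨
     (y ∈ S2 ∧ (x = v 2 ∨ x = v 3 ∨ x = v 4 ∨ x = v 5)))

section RSeq
variable {V : Type*} [DecidableEq V] {G : SimpleGraph V} {ℓ : ℕ}

/-- Reconfiguration path from `c` to `d` recoloring each vertex `a` at most `κ a` times. -/
def RSeq (G : SimpleGraph V) (ℓ : ℕ) (c d : V → Fin ℓ) (κ : V → ℕ) : Prop :=
  ∃ m cs, IsRecolorSeq G ℓ m cs ∧ cs 0 = c ∧ cs m = d ∧ ∀ a, recolorCount m cs a ≤ κ a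

theorem RSeq.mono {c d : V → Fin ℓ} {κ κ' : V → ℕ} (h : RSeq G ℓ c d κ)
    (hk : ∀ a, κ a ≤ κ' a) : RSeq G ℓ c d κ' := by
  obtain ⟨m, cs, h1, h2, h3, h4⟩ := h
  exact ⟨m, cs, h1, h2, h3, fun a => (h4 a).trans (hk a)⟩

theorem RSeq.refl {c : V → Fin ℓ} (hc : IsProperColoring G ℓ c) (κ : V → ℕ) :
    RSeq G ℓ c c κ := by
  refine ⟨0, fun _ => c, ⟨fun i _ => hc, fun i hi => by omega⟩, rfl, rfl, fun a => ?_⟩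
  simp [recolorCount]

theorem RSeq.single {c : V → Fin ℓ} {x : V} {γ : Fin ℓ} (hc : IsProperColoring G ℓ c)
    (hd : IsProperColoring G ℓ (Function.update c x γ)) :
    RSeq G ℓ c (Function.update c x γ) (fun a => if a = x then 1 else 0) := by
  refine ⟨1, fun i => if i = 0 then c else Function.update c x γ, ⟨?_, ?_⟩, by simp, by simp,
    fun a => ?_⟩
  · intro i _
    by_cases hi : i = 0
    · simpa [hi] using hc
    · simpa [hi] using hd
  · intro i hi a b hab hne
    interval_cases i
    norm_num at hne ⊢
    by_cases hbx : b = x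
    · exfalso
      apply hne
      subst hbx
      rw [Function.update_of_ne hab]
    · rw [Function.update_of_ne hbx]
  · by_cases hax : a = x
    · subst hax
      simp only [if_pos rfl, recolorCount]
      exact (Finset.card_filter_le _ _).trans (by simp)
    · simp only [recolorCount, if_neg hax]
      rw [Finset.card_eq_zero.2]
      rw [Finset.filter_eq_empty_iff]
      intro i hi
      simp only [Finset.mem_range] at hi
      interval_cases i
      simp [Function.update_of_ne hax]

theorem RSeq.trans {c d e : V → Fin ℓ} {κ₁ κ₂ : V → ℕ} (h1 : RSeq G ℓ c d κ₁)
    (h2 : RSeq G ℓ d e κ₂) : RSeq G ℓ c e (fun a => κ₁ a + κ₂ a) := by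
  classical
  obtain ⟨m₁, cs₁, ⟨p1, q1⟩, e1, f1, g1⟩ := h1
  obtain ⟨m₂, cs₂, ⟨p2, q2⟩, e2, f2, g2⟩ := h2
  set cs : ℕ → V → Fin ℓ := fun i => if i ≤ m₁ then cs₁ i else cs₂ (i - m₁) with hcs
  have key : ∀ i, m₁ ≤ i → cs i = cs₂ (i - m₁) := by
    intro i hi
    rcases eq_or_lt_of_le hi with hi' | hi'
    · subst hi'; simp [hcs, f1, ← e2]
    · simp [hcs, Nat.not_le.2 hi']
  refine ⟨m₁ + m₂, cs, ⟨?_, ?_⟩, by simp [hcs, e1], ?_, fun a => ?_⟩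
  · intro i hi
    by_cases hle : i ≤ m₁
    · simpa [hcs, hle] using p1 i hle
    · rw [key i (by omega)]
      exact p2 _ (by omega)
  · intro i hi a b hab hne
    by_cases hle : i + 1 ≤ m₁
    · have : cs i = cs₁ i := by simp [hcs]; intro hh; omega
      have h2' : cs (i+1) = cs₁ (i+1) := by simp [hcs, hle]
      rw [this, h2'] at hne ⊢
      exact q1 i (by omega) a b hab hne
    · by_cases hle2 : m₁ ≤ i
      · rw [key i hle2, key (i+1) (by omega)] at hne ⊢
        have : i + 1 - m₁ = (i - m₁) + 1 := by omega
        rw [this] at hne ⊢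
        exact q2 (i - m₁) (by omega) a b hab hne
      · omega
  · rw [key (m₁ + m₂) (by omega)]
    simp [f2]
  · have hsub : (Finset.range (m₁ + m₂)).filter (fun i => cs i a ≠ cs (i + 1) a) ⊆
        ((Finset.range m₁).filter fun i => cs₁ i a ≠ cs₁ (i + 1) a) ∪
        (((Finset.range m₂).filter fun i => cs₂ i a ≠ cs₂ (i + 1) a).image (· + m₁)) := by
      intro i hi
      simp only [Finset.mem_filter, Finset.mem_range] at hi
      obtain ⟨hir, hine⟩ := hi
      by_cases hle : i + 1 ≤ m₁
      · apply Finset.mem_union_left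
        have c1 : cs i = cs₁ i := by simp [hcs]; intro hh; omega
        have c2 : cs (i+1) = cs₁ (i+1) := by simp [hcs, hle]
        rw [c1, c2] at hine
        simp only [Finset.mem_filter, Finset.mem_range]
        exact ⟨by omega, hine⟩
      · apply Finset.mem_union_right
        have hm : m₁ ≤ i := by omega
        rw [key i hm, key (i+1) (by omega), show i + 1 - m₁ = (i - m₁) + 1 by omega] at hine
        simp only [Finset.mem_image, Finset.mem_filter, Finset.mem_range]
        exact ⟨i - m₁, ⟨by omega, hine⟩, by omega⟩
    calc ((Finset.range (m₁ + m₂)).filter fun i => cs i a ≠ cs (i + 1) a).card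
        ≤ _ := Finset.card_le_card hsub
      _ ≤ _ + _ := Finset.card_union_le _ _
      _ ≤ κ₁ a + κ₂ a := by
          gcongr
          · exact g1 a
          · exact (Finset.card_image_le).trans (g2 a)

theorem RSeq.symm {c d : V → Fin ℓ} {κ : V → ℕ} (h : RSeq G ℓ c d κ) : RSeq G ℓ d c κ := by
  classical
  obtain ⟨m, cs, ⟨p, q⟩, e0, em, g⟩ := h
  refine ⟨m, fun i => cs (m - i), ⟨fun i _ => p _ (by omega), ?_⟩, by simp [em], by simp [e0],
    fun a => ?_⟩
  · intro i hi a b hab hne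
    simp only [] at hne ⊢
    have h1 : m - i = (m - (i+1)) + 1 := by omega
    rw [h1] at hne ⊢
    exact (q (m - (i+1)) (by omega) a b hab (fun hh => hne hh.symm)).symm
  · simp only [recolorCount]
    refine le_trans (le_of_eq ?_) (g a)
    apply Finset.card_bij' (fun i _ => m - 1 - i) (fun j _ => m - 1 - j)
    · intro i hi
      simp only [Finset.mem_filter, Finset.mem_range] at hi ⊢
      obtain ⟨hir, hine⟩ := hi
      have h1 : m - i = (m - 1 - i) + 1 := by omega
      rw [h1] at hine
      have h2 : m - (i+1) = m - 1 - i := by omega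
      rw [h2] at hine
      exact ⟨by omega, fun hh => hine hh.symm⟩
    · intro j hj
      simp only [Finset.mem_filter, Finset.mem_range] at hj ⊢
      obtain ⟨hjr, hjne⟩ := hj
      refine ⟨by omega, ?_⟩
      have h1 : m - (m - 1 - j) = j + 1 := by omega
      have h2 : m - (m - 1 - j + 1) = j := by omega
      rw [h1, h2]
      exact fun hh => hjne hh.symm
    · intro i hi; simp only [Finset.mem_filter, Finset.mem_range] at hi; omega
    · intro j hj; simp only [Finset.mem_filter, Finset.mem_range] at hj; omega

end RSeq

instance : DecidablePred (fun p : Fin 6 × Fin 6 => c6adj p.1 p.2) := fun p => by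
  unfold c6adj; infer_instance

instance (i j : Fin 6) : Decidable (c6adj i j) := by unfold c6adj; infer_instance

namespace H5Data
variable {V : Type*} [DecidableEq V] {G : SimpleGraph V} (h : H5Data G)

theorem v_ne {i j : Fin 6} (hij : i ≠ j) : h.v i ≠ h.v j := fun hh => hij (h.inj hh)

theorem s1_ne_v {x} (hx : x ∈ h.S1) (i : Fin 6) : x ≠ h.v i :=
  fun hh => (h.notin i).1 (hh ▸ hx)

theorem s2_ne_v {x} (hx : x ∈ h.S2) (i : Fin 6) : x ≠ h.v i :=
  fun hh => (h.notin i).2 (hh ▸ hx)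

theorem s1_ne_s2 {x y} (hx : x ∈ h.S1) (hy : y ∈ h.S2) : x ≠ y := by
  intro hh; subst hh; exact Finset.disjoint_left.1 h.d12 hx hy

theorem adj_s1s1 {x y} (hx : x ∈ h.S1) (hy : y ∈ h.S1) (hxy : x ≠ y) : G.Adj x y :=
  (h.adj_iff x y).2 ⟨hxy, Or.inr (Or.inl ⟨hx, hy⟩)⟩

theorem adj_s2s2 {x y} (hx : x ∈ h.S2) (hy : y ∈ h.S2) (hxy : x ≠ y) : G.Adj x y :=
  (h.adj_iff x y).2 ⟨hxy, Or.inr (Or.inr (Or.inl ⟨hx, hy⟩))⟩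

theorem adj_s1s2 {x y} (hx : x ∈ h.S1) (hy : y ∈ h.S2) : G.Adj x y :=
  (h.adj_iff x y).2 ⟨h.s1_ne_s2 hx hy, Or.inr <| Or.inr <| Or.inr <| Or.inl ⟨hx, hy⟩⟩

theorem adj_s1v {x} (hx : x ∈ h.S1) {i : Fin 6} (hi : i = 0 ∨ i = 1 ∨ i = 2 ∨ i = 5) :
    G.Adj x (h.v i) := by
  refine (h.adj_iff x _).2 ⟨h.s1_ne_v hx i, Or.inr <| Or.inr <| Or.inr <| Or.inr <| Or.inr <|
    Or.inl ⟨hx, ?_⟩⟩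
  rcases hi with rfl | rfl | rfl | rfl
  · exact Or.inl rfl
  · exact Or.inr (Or.inl rfl)
  · exact Or.inr (Or.inr (Or.inl rfl))
  · exact Or.inr (Or.inr (Or.inr rfl))

theorem adj_s2v {x} (hx : x ∈ h.S2) {i : Fin 6} (hi : i = 2 ∨ i = 3 ∨ i = 4 ∨ i = 5) :
    G.Adj x (h.v i) := by
  refine (h.adj_iff x _).2 ⟨h.s2_ne_v hx i, Or.inr <| Or.inr <| Or.inr <| Or.inr <| Or.inr <|
    Or.inr <| Or.inr <| Or.inl ⟨hx, ?_⟩⟩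
  rcases hi with rfl | rfl | rfl | rfl
  · exact Or.inl rfl
  · exact Or.inr (Or.inl rfl)
  · exact Or.inr (Or.inr (Or.inl rfl))
  · exact Or.inr (Or.inr (Or.inr rfl))

theorem adj_vv {i j : Fin 6} (hc : c6adj i j) : G.Adj (h.v i) (h.v j) := by
  have hij : i ≠ j := by revert hc; revert i j; decide
  exact (h.adj_iff _ _).2 ⟨h.v_ne hij, Or.inl ⟨i, j, rfl, rfl, hc⟩⟩

/-- Forward elimination for cycle vertices. -/
theorem adj_v_elim {i : Fin 6} {y} (hy : G.Adj (h.v i) y) :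
    (∃ j, c6adj i j ∧ y = h.v j) ∨
    (y ∈ h.S1 ∧ (i = 0 ∨ i = 1 ∨ i = 2 ∨ i = 5)) ∨
    (y ∈ h.S2 ∧ (i = 2 ∨ i = 3 ∨ i = 4 ∨ i = 5)) := by
  rw [h.adj_iff] at hy
  obtain ⟨-, hy⟩ := hy
  rcases hy with ⟨i', j, he, rfl, hc⟩ | ⟨hx, _⟩ | ⟨hx, _⟩ | ⟨hx, _⟩ | ⟨hx, _⟩ |
      ⟨hx, _⟩ | ⟨hy', hi⟩ | ⟨hx, _⟩ | ⟨hy', hi⟩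
  · exact Or.inl ⟨j, h.inj he ▸ hc, rfl⟩
  · exact absurd hx (h.notin i).1
  · exact absurd hx (h.notin i).2
  · exact absurd hx (h.notin i).1
  · exact absurd hx (h.notin i).2
  · exact absurd hx (h.notin i).1
  · refine Or.inr (Or.inl ⟨hy', ?_⟩)
    rcases hi with he | he | he | he
    · exact Or.inl (h.inj he)
    · exact Or.inr (Or.inl (h.inj he))
    · exact Or.inr (Or.inr (Or.inl (h.inj he)))
    · exact Or.inr (Or.inr (Or.inr (h.inj he)))
  · exact absurd hx (h.notin i).2
  · refine Or.inr (Or.inr ⟨hy', ?_⟩)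
    rcases hi with he | he | he | he
    · exact Or.inl (h.inj he)
    · exact Or.inr (Or.inl (h.inj he))
    · exact Or.inr (Or.inr (Or.inl (h.inj he)))
    · exact Or.inr (Or.inr (Or.inr (h.inj he)))

theorem adj_s1_elim {x y} (hx : x ∈ h.S1) (hxy : G.Adj x y) :
    y ∈ h.S1 ∨ y ∈ h.S2 ∨ y = h.v 0 ∨ y = h.v 1 ∨ y = h.v 2 ∨ y = h.v 5 := by
  rw [h.adj_iff] at hxy
  obtain ⟨-, hy⟩ := hxy
  rcases hy with ⟨i', j, he, rfl, hc⟩ | ⟨_, hy⟩ | ⟨hx', _⟩ | ⟨_, hy⟩ | ⟨hx', _⟩ |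
      ⟨_, hy⟩ | ⟨hy', _⟩ | ⟨hx', _⟩ | ⟨hy', _⟩
  · exact absurd he (h.s1_ne_v hx i')
  · exact Or.inl hy
  · exact absurd rfl (h.s1_ne_s2 hx hx')
  · exact Or.inr (Or.inl hy)
  · exact absurd rfl (h.s1_ne_s2 hx hx')
  · tauto
  · exact Or.inl hy'
  · exact absurd rfl (h.s1_ne_s2 hx hx')
  · exact Or.inr (Or.inl hy')

theorem adj_s2_elim {x y} (hx : x ∈ h.S2) (hxy : G.Adj x y) :
    y ∈ h.S1 ∨ y ∈ h.S2 ∨ y = h.v 2 ∨ y = h.v 3 ∨ y = h.v 4 ∨ y = h.v 5 := by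
  rw [h.adj_iff] at hxy
  obtain ⟨-, hy⟩ := hxy
  rcases hy with ⟨i', j, he, rfl, hc⟩ | ⟨hx', _⟩ | ⟨_, hy⟩ | ⟨hx', _⟩ | ⟨_, hy⟩ |
      ⟨hx', _⟩ | ⟨hy', _⟩ | ⟨_, hy⟩ | ⟨hy', _⟩
  · exact absurd he (h.s2_ne_v hx i')
  · exact absurd rfl (h.s1_ne_s2 hx' hx)
  · exact Or.inr (Or.inl hy)
  · exact absurd rfl (h.s1_ne_s2 hx' hx)
  · exact Or.inl hy
  · exact absurd rfl (h.s1_ne_s2 hx' hx)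
  · exact Or.inl hy'
  · tauto
  · exact Or.inr (Or.inl hy')


section
variable {V : Type*} [DecidableEq V] {G : SimpleGraph V} (h : H5Data G) {ℓ : ℕ}

theorem adj_v0_elim {y} (hy : G.Adj (h.v 0) y) : y = h.v 1 ∨ y = h.v 5 ∨ y ∈ h.S1 := by
  rcases h.adj_v_elim hy with ⟨j, hc, rfl⟩ | ⟨hy1, _⟩ | ⟨hy2, hi⟩
  · have hj : j = 1 ∨ j = 5 := (by decide : ∀ j : Fin 6, c6adj 0 j → (j = 1 ∨ j = 5)) j hc
    rcases hj with rfl | rfl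
    · exact Or.inl rfl
    · exact Or.inr (Or.inl rfl)
  · exact Or.inr (Or.inr hy1)
  · rcases hi with hi | hi | hi | hi <;> exact absurd hi (by decide)

theorem adj_v1_elim {y} (hy : G.Adj (h.v 1) y) : y = h.v 0 ∨ y = h.v 2 ∨ y ∈ h.S1 := by
  rcases h.adj_v_elim hy with ⟨j, hc, rfl⟩ | ⟨hy1, _⟩ | ⟨hy2, hi⟩
  · have hj : j = 0 ∨ j = 2 := (by decide : ∀ j : Fin 6, c6adj 1 j → (j = 0 ∨ j = 2)) j hc
    rcases hj with rfl | rfl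
    · exact Or.inl rfl
    · exact Or.inr (Or.inl rfl)
  · exact Or.inr (Or.inr hy1)
  · rcases hi with hi | hi | hi | hi <;> exact absurd hi (by decide)

theorem adj_v2_elim {y} (hy : G.Adj (h.v 2) y) :
    y = h.v 1 ∨ y = h.v 3 ∨ y ∈ h.S1 ∨ y ∈ h.S2 := by
  rcases h.adj_v_elim hy with ⟨j, hc, rfl⟩ | ⟨hy1, _⟩ | ⟨hy2, hi⟩
  · have hj : j = 1 ∨ j = 3 := (by decide : ∀ j : Fin 6, c6adj 2 j → (j = 1 ∨ j = 3)) j hc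
    rcases hj with rfl | rfl
    · exact Or.inl rfl
    · exact Or.inr (Or.inl rfl)
  · exact Or.inr (Or.inr (Or.inl hy1))
  · exact Or.inr (Or.inr (Or.inr hy2))

theorem adj_v3_elim {y} (hy : G.Adj (h.v 3) y) : y = h.v 2 ∨ y = h.v 4 ∨ y ∈ h.S2 := by
  rcases h.adj_v_elim hy with ⟨j, hc, rfl⟩ | ⟨hy1, hi⟩ | ⟨hy2, _⟩
  · have hj : j = 2 ∨ j = 4 := (by decide : ∀ j : Fin 6, c6adj 3 j → (j = 2 ∨ j = 4)) j hc
    rcases hj with rfl | rfl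
    · exact Or.inl rfl
    · exact Or.inr (Or.inl rfl)
  · rcases hi with hi | hi | hi | hi <;> exact absurd hi (by decide)
  · exact Or.inr (Or.inr hy2)

theorem adj_v4_elim {y} (hy : G.Adj (h.v 4) y) : y = h.v 3 ∨ y = h.v 5 ∨ y ∈ h.S2 := by
  rcases h.adj_v_elim hy with ⟨j, hc, rfl⟩ | ⟨hy1, hi⟩ | ⟨hy2, _⟩
  · have hj : j = 3 ∨ j = 5 := (by decide : ∀ j : Fin 6, c6adj 4 j → (j = 3 ∨ j = 5)) j hc
    rcases hj with rfl | rfl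
    · exact Or.inl rfl
    · exact Or.inr (Or.inl rfl)
  · rcases hi with hi | hi | hi | hi <;> exact absurd hi (by decide)
  · exact Or.inr (Or.inr hy2)

theorem adj_v5_elim {y} (hy : G.Adj (h.v 5) y) :
    y = h.v 4 ∨ y = h.v 0 ∨ y ∈ h.S1 ∨ y ∈ h.S2 := by
  rcases h.adj_v_elim hy with ⟨j, hc, rfl⟩ | ⟨hy1, _⟩ | ⟨hy2, hi⟩
  · have hj : j = 4 ∨ j = 0 := (by decide : ∀ j : Fin 6, c6adj 5 j → (j = 4 ∨ j = 0)) j hc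
    rcases hj with rfl | rfl
    · exact Or.inl rfl
    · exact Or.inr (Or.inl rfl)
  · exact Or.inr (Or.inr (Or.inl hy1))
  · exact Or.inr (Or.inr (Or.inr hy2))

theorem proper_update {c : V → Fin ℓ} {x : V} {γ : Fin ℓ} (hc : IsProperColoring G ℓ c)
    (hx : ∀ y, G.Adj x y → γ ≠ c y) : IsProperColoring G ℓ (Function.update c x γ) := by
  intro a b hab
  rcases eq_or_ne a x with rfl | ha
  · rw [Function.update_self, Function.update_of_ne hab.ne']
    exact hx b hab
  · rcases eq_or_ne b x with rfl | hb
    · rw [Function.update_of_ne ha, Function.update_self]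
      exact fun hh => hx a hab.symm hh.symm
    · rw [Function.update_of_ne ha, Function.update_of_ne hb]
      exact hc hab

variable {c : V → Fin ℓ} {γ : Fin ℓ} (hc : IsProperColoring G ℓ c)
include hc

theorem move_v0 (h1 : ∀ s ∈ h.S1, γ ≠ c s) (h2 : γ ≠ c (h.v 1)) (h3 : γ ≠ c (h.v 5)) :
    IsProperColoring G ℓ (Function.update c (h.v 0) γ) :=
  proper_update hc fun y hy => by
    rcases h.adj_v0_elim hy with rfl | rfl | hs
    exacts [h2, h3, h1 y hs]

theorem move_v1 (h1 : ∀ s ∈ h.S1, γ ≠ c s) (h2 : γ ≠ c (h.v 0)) (h3 : γ ≠ c (h.v 2)) :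
    IsProperColoring G ℓ (Function.update c (h.v 1) γ) :=
  proper_update hc fun y hy => by
    rcases h.adj_v1_elim hy with rfl | rfl | hs
    exacts [h2, h3, h1 y hs]

theorem move_v2 (h1 : ∀ s ∈ h.S1, γ ≠ c s) (h1' : ∀ s ∈ h.S2, γ ≠ c s)
    (h2 : γ ≠ c (h.v 1)) (h3 : γ ≠ c (h.v 3)) :
    IsProperColoring G ℓ (Function.update c (h.v 2) γ) :=
  proper_update hc fun y hy => by
    rcases h.adj_v2_elim hy with rfl | rfl | hs | hs
    exacts [h2, h3, h1 y hs, h1' y hs]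

theorem move_v3 (h1 : ∀ s ∈ h.S2, γ ≠ c s) (h2 : γ ≠ c (h.v 2)) (h3 : γ ≠ c (h.v 4)) :
    IsProperColoring G ℓ (Function.update c (h.v 3) γ) :=
  proper_update hc fun y hy => by
    rcases h.adj_v3_elim hy with rfl | rfl | hs
    exacts [h2, h3, h1 y hs]

theorem move_v4 (h1 : ∀ s ∈ h.S2, γ ≠ c s) (h2 : γ ≠ c (h.v 3)) (h3 : γ ≠ c (h.v 5)) :
    IsProperColoring G ℓ (Function.update c (h.v 4) γ) :=
  proper_update hc fun y hy => by
    rcases h.adj_v4_elim hy with rfl | rfl | hs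
    exacts [h2, h3, h1 y hs]

theorem move_v5 (h1 : ∀ s ∈ h.S1, γ ≠ c s) (h1' : ∀ s ∈ h.S2, γ ≠ c s)
    (h2 : γ ≠ c (h.v 4)) (h3 : γ ≠ c (h.v 0)) :
    IsProperColoring G ℓ (Function.update c (h.v 5) γ) :=
  proper_update hc fun y hy => by
    rcases h.adj_v5_elim hy with rfl | rfl | hs | hs
    exacts [h2, h3, h1 y hs, h1' y hs]

theorem move_s1 {x} (hx : x ∈ h.S1) (h1 : ∀ s ∈ h.S1, s ≠ x → γ ≠ c s)
    (h2 : ∀ s ∈ h.S2, γ ≠ c s) (h3 : γ ≠ c (h.v 0)) (h4 : γ ≠ c (h.v 1))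
    (h5 : γ ≠ c (h.v 2)) (h6 : γ ≠ c (h.v 5)) :
    IsProperColoring G ℓ (Function.update c x γ) :=
  proper_update hc fun y hy => by
    rcases h.adj_s1_elim hx hy with hs | hs | rfl | rfl | rfl | rfl
    exacts [h1 y hs hy.ne', h2 y hs, h3, h4, h5, h6]

theorem move_s2 {x} (hx : x ∈ h.S2) (h1 : ∀ s ∈ h.S2, s ≠ x → γ ≠ c s)
    (h2 : ∀ s ∈ h.S1, γ ≠ c s) (h3 : γ ≠ c (h.v 2)) (h4 : γ ≠ c (h.v 3))
    (h5 : γ ≠ c (h.v 4)) (h6 : γ ≠ c (h.v 5)) :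
    IsProperColoring G ℓ (Function.update c x γ) :=
  proper_update hc fun y hy => by
    rcases h.adj_s2_elim hx hy with hs | hs | rfl | rfl | rfl | rfl
    exacts [h2 y hs, h1 y hs hy.ne', h3, h4, h5, h6]

end



section
variable {V : Type*} [DecidableEq V] [Fintype V] {G : SimpleGraph V} (h : H5Data G) {ℓ : ℕ}

/-- The central clique `S₁ ∪ S₂ ∪ {v₂}`. -/
def Qset (h : H5Data G) [DecidableEq V] : Finset V := h.S1 ∪ h.S2 ∪ {h.v 2}

theorem mem_Qset {x : V} : x ∈ h.Qset ↔ x ∈ h.S1 ∨ x ∈ h.S2 ∨ x = h.v 2 := by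
  simp [Qset, or_assoc]; tauto

theorem v2_mem_Qset : h.v 2 ∈ h.Qset := h.mem_Qset.2 (Or.inr (Or.inr rfl))

theorem s1_subset_Qset {x : V} (hx : x ∈ h.S1) : x ∈ h.Qset := h.mem_Qset.2 (Or.inl hx)
theorem s2_subset_Qset {x : V} (hx : x ∈ h.S2) : x ∈ h.Qset := h.mem_Qset.2 (Or.inr (Or.inl hx))

theorem v_notin_Qset {i : Fin 6} (hi : i ≠ 2) : h.v i ∉ h.Qset := by
  rw [mem_Qset]
  push_neg
  exact ⟨(h.notin i).1, (h.notin i).2, h.v_ne hi⟩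

theorem adj_Q {x y : V} (hx : x ∈ h.Qset) (hy : y ∈ h.Qset) (hxy : x ≠ y) : G.Adj x y := by
  rw [mem_Qset] at hx hy
  rcases hx with hx | hx | rfl <;> rcases hy with hy | hy | rfl
  · exact h.adj_s1s1 hx hy hxy
  · exact h.adj_s1s2 hx hy
  · exact h.adj_s1v hx (by tauto)
  · exact (h.adj_s1s2 hy hx).symm
  · exact h.adj_s2s2 hx hy hxy
  · exact h.adj_s2v hx (by tauto)
  · exact (h.adj_s1v hy (by tauto)).symm
  · exact (h.adj_s2v hy (by tauto)).symm
  · exact absurd rfl hxy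

theorem Qinj {c : V → Fin ℓ} (hc : IsProperColoring G ℓ c) :
    ∀ x ∈ h.Qset, ∀ y ∈ h.Qset, c x = c y → x = y := by
  intro x hx y hy he
  by_contra hxy
  exact hc (h.adj_Q hx hy hxy) he

theorem card_Qset : h.Qset.card = h.S1.card + h.S2.card + 1 := by
  rw [Qset, Finset.card_union_of_disjoint, Finset.card_union_of_disjoint h.d12,
    Finset.card_singleton]
  rw [Finset.disjoint_singleton_right, Finset.mem_union]
  push_neg
  exact ⟨(h.notin 2).1, (h.notin 2).2⟩

theorem card_image_Q {c : V → Fin ℓ} (hc : IsProperColoring G ℓ c) :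
    (h.Qset.image c).card = h.S1.card + h.S2.card + 1 := by
  rw [Finset.card_image_of_injOn fun x hx y hy => h.Qinj hc x hx y hy, h.card_Qset]

theorem exists_free {c : V → Fin ℓ} (hc : IsProperColoring G ℓ c)
    (hl : h.S1.card + h.S2.card + 2 ≤ ℓ) : ∃ f : Fin ℓ, f ∉ h.Qset.image c := by
  have h1 : (h.Qset.image c).card < Fintype.card (Fin ℓ) := by
    rw [h.card_image_Q hc, Fintype.card_fin]; omega
  have h2 : 0 < (h.Qset.image c)ᶜ.card := by
    rw [Finset.card_compl]; omega
  obtain ⟨f, hf⟩ := Finset.card_pos.1 h2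
  exact ⟨f, Finset.mem_compl.1 hf⟩

variable (a1 a2 b1 b2 : V)

/-- The shadow invariant: each outer cycle vertex copies the colour of its host. -/
def IsShadow (c : V → Fin ℓ) : Prop :=
  c (h.v 0) = c b1 ∧ c (h.v 1) = c b2 ∧ c (h.v 3) = c a1 ∧ c (h.v 4) = c a2 ∧
    c (h.v 5) = c (h.v 2)

/-- The host of each vertex: shadow vertices map to their hosts, others to themselves. -/
def host (x : V) : V :=
  if x = h.v 0 then b1 else if x = h.v 1 then b2 else if x = h.v 3 then a1
  else if x = h.v 4 then a2 else if x = h.v 5 then h.v 2 else x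

variable {a1 a2 b1 b2}
variable (ha1 : a1 ∈ h.S1) (ha2 : a2 ∈ h.S1) (haa : a1 ≠ a2)
  (hb1 : b1 ∈ h.S2) (hb2 : b2 ∈ h.S2) (hbb : b1 ≠ b2)

section hostlem
include ha1 ha2 hb1 hb2

theorem host_mem (x : V) : h.host a1 a2 b1 b2 x ∈ h.Qset := by
  unfold host
  split_ifs with h0 h1 h3 h4 h5
  · exact h.s2_subset_Qset hb1
  · exact h.s2_subset_Qset hb2
  · exact h.s1_subset_Qset ha1
  · exact h.s1_subset_Qset ha2
  · exact h.v2_mem_Qset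
  · rcases h.cover x with (hx | hx) | ⟨i, rfl⟩
    · exact h.s1_subset_Qset hx
    · exact h.s2_subset_Qset hx
    · fin_cases i
      · exact absurd rfl h0
      · exact absurd rfl h1
      · exact h.v2_mem_Qset
      · exact absurd rfl h3
      · exact absurd rfl h4
      · exact absurd rfl h5

theorem host_eq_self {x : V} (hx : x ∈ h.Qset) : h.host a1 a2 b1 b2 x = x := by
  have hv : ∀ i : Fin 6, i ≠ 2 → x ≠ h.v i := fun i hi hh => h.v_notin_Qset hi (hh ▸ hx)
  unfold host
  rw [if_neg (hv 0 (by decide)), if_neg (hv 1 (by decide)), if_neg (hv 3 (by decide)),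
    if_neg (hv 4 (by decide)), if_neg (hv 5 (by decide))]

theorem host_v0 : h.host a1 a2 b1 b2 (h.v 0) = b1 := by unfold host; simp
theorem host_v1 : h.host a1 a2 b1 b2 (h.v 1) = b2 := by
  unfold host
  rw [if_neg (h.v_ne (by decide)), if_pos rfl]
theorem host_v3 : h.host a1 a2 b1 b2 (h.v 3) = a1 := by
  unfold host
  rw [if_neg (h.v_ne (by decide)), if_neg (h.v_ne (by decide)), if_pos rfl]
theorem host_v4 : h.host a1 a2 b1 b2 (h.v 4) = a2 := by
  unfold host
  rw [if_neg (h.v_ne (by decide)), if_neg (h.v_ne (by decide)),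
    if_neg (h.v_ne (by decide)), if_pos rfl]
theorem host_v5 : h.host a1 a2 b1 b2 (h.v 5) = h.v 2 := by
  unfold host
  rw [if_neg (h.v_ne (by decide)), if_neg (h.v_ne (by decide)),
    if_neg (h.v_ne (by decide)), if_neg (h.v_ne (by decide)), if_pos rfl]

theorem eq_of_shadow {c d : V → Fin ℓ} (hc : h.IsShadow a1 a2 b1 b2 c)
    (hd : h.IsShadow a1 a2 b1 b2 d) (hQ : ∀ x ∈ h.Qset, c x = d x) : c = d := by
  funext x
  rcases h.cover x with (hx | hx) | ⟨i, rfl⟩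
  · exact hQ x (h.s1_subset_Qset hx)
  · exact hQ x (h.s2_subset_Qset hx)
  · have hv2 : c (h.v 2) = d (h.v 2) := hQ _ h.v2_mem_Qset
    rcases (by decide : ∀ j : Fin 6, j = 0 ∨ j = 1 ∨ j = 2 ∨ j = 3 ∨ j = 4 ∨ j = 5) i with
      rfl | rfl | rfl | rfl | rfl | rfl
    · rw [hc.1, hd.1]; exact hQ _ (h.s2_subset_Qset hb1)
    · rw [hc.2.1, hd.2.1]; exact hQ _ (h.s2_subset_Qset hb2)
    · exact hv2
    · rw [hc.2.2.1, hd.2.2.1]; exact hQ _ (h.s1_subset_Qset ha1)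
    · rw [hc.2.2.2.1, hd.2.2.2.1]; exact hQ _ (h.s1_subset_Qset ha2)
    · rw [hc.2.2.2.2, hd.2.2.2.2]; exact hv2

end hostlem
end



section
variable {V : Type*} [DecidableEq V] [Fintype V] {G : SimpleGraph V} (h : H5Data G) {ℓ : ℕ}
variable {a1 a2 b1 b2 : V} {c : V → Fin ℓ}
variable (ha1 : a1 ∈ h.S1) (ha2 : a2 ∈ h.S1) (haa : a1 ≠ a2)
  (hb1 : b1 ∈ h.S2) (hb2 : b2 ∈ h.S2) (hbb : b1 ≠ b2)

section sync
include ha1 ha2 haa hb1 hb2 hbb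

theorem syncmove_a1 (hc : IsProperColoring G ℓ c) (hsh : h.IsShadow a1 a2 b1 b2 c)
    {γ : Fin ℓ} (hγ : ∀ x ∈ h.Qset, γ ≠ c x) :
    ∃ c', RSeq G ℓ c c' (fun x => if h.host a1 a2 b1 b2 x = a1 then 1 else 0) ∧
      IsProperColoring G ℓ c' ∧ h.IsShadow a1 a2 b1 b2 c' ∧
      ∀ x ∈ h.Qset, c' x = Function.update c a1 γ x := by
  obtain ⟨sh1, sh2, sh3, sh4, sh5⟩ := hsh
  have hγ1 : ∀ s ∈ h.S1, γ ≠ c s := fun s hs => hγ s (h.s1_subset_Qset hs)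
  have hγ2 : ∀ s ∈ h.S2, γ ≠ c s := fun s hs => hγ s (h.s2_subset_Qset hs)
  have hγv2 : γ ≠ c (h.v 2) := hγ _ h.v2_mem_Qset
  have na1v : ∀ i : Fin 6, a1 ≠ h.v i := h.s1_ne_v ha1
  have na2v : ∀ i : Fin 6, a2 ≠ h.v i := h.s1_ne_v ha2
  have nb1v : ∀ i : Fin 6, b1 ≠ h.v i := h.s2_ne_v hb1
  have nb2v : ∀ i : Fin 6, b2 ≠ h.v i := h.s2_ne_v hb2
  have nb1a : b1 ≠ a1 := (h.s1_ne_s2 ha1 hb1).symm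
  have nb2a : b2 ≠ a1 := (h.s1_ne_s2 ha1 hb2).symm
  set c1 := Function.update c a1 γ with hc1
  have hp1 : IsProperColoring G ℓ c1 :=
    h.move_s1 hc ha1 (fun s hs _ => hγ1 s hs) hγ2 (sh1 ▸ hγ2 b1 hb1) (sh2 ▸ hγ2 b2 hb2)
      hγv2 (sh5 ▸ hγv2)
  set c2 := Function.update c1 (h.v 3) γ with hc2
  have e1 : ∀ x, x ≠ a1 → c1 x = c x := fun x hx => Function.update_of_ne hx _ _
  have e2 : ∀ x, x ≠ h.v 3 → c2 x = c1 x := fun x hx => Function.update_of_ne hx _ _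
  have hp2 : IsProperColoring G ℓ c2 := by
    apply h.move_v3 hp1
    · intro s hs
      rw [e1 s (h.s1_ne_s2 ha1 hs).symm]
      exact hγ2 s hs
    · rw [e1 _ (na1v 2).symm]
      exact hγv2
    · rw [e1 _ (na1v 4).symm, sh4]
      exact hγ1 a2 ha2
  refine ⟨c2, ?_, hp2, ?_, ?_⟩
  · have := (RSeq.single hc hp1).trans (RSeq.single hp1 hp2)
    refine this.mono fun x => ?_
    by_cases hx1 : x = a1
    · subst hx1
      rw [if_pos rfl, if_neg (na1v 3), if_pos (h.host_eq_self ha1 ha2 hb1 hb2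
        (h.s1_subset_Qset ha1))]
    · by_cases hx2 : x = h.v 3
      · subst hx2
        rw [if_neg hx1, if_pos rfl, if_pos (h.host_v3 ha1 ha2 hb1 hb2)]
      · rw [if_neg hx1, if_neg hx2]
        simp
  · refine ⟨?_, ?_, ?_, ?_, ?_⟩
    · rw [e2 (h.v 0) (h.v_ne (by decide)), e1 (h.v 0) (na1v 0).symm, e2 b1 (nb1v 3),
        e1 b1 nb1a]
      exact sh1
    · rw [e2 (h.v 1) (h.v_ne (by decide)), e1 (h.v 1) (na1v 1).symm, e2 b2 (nb2v 3),
        e1 b2 nb2a]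
      exact sh2
    · rw [e2 a1 (na1v 3)]
      simp only [hc2, hc1, Function.update_self]
    · rw [e2 (h.v 4) (h.v_ne (by decide)), e1 (h.v 4) (na1v 4).symm, e2 a2 (na2v 3),
        e1 a2 haa.symm]
      exact sh4
    · rw [e2 (h.v 5) (h.v_ne (by decide)), e1 (h.v 5) (na1v 5).symm,
        e2 (h.v 2) (h.v_ne (by decide)), e1 (h.v 2) (na1v 2).symm]
      exact sh5
  · intro x hx
    rw [e2 x fun hh => h.v_notin_Qset (by decide) (hh ▸ hx)]

theorem syncmove_a2 (hc : IsProperColoring G ℓ c) (hsh : h.IsShadow a1 a2 b1 b2 c)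
    {γ : Fin ℓ} (hγ : ∀ x ∈ h.Qset, γ ≠ c x) :
    ∃ c', RSeq G ℓ c c' (fun x => if h.host a1 a2 b1 b2 x = a2 then 1 else 0) ∧
      IsProperColoring G ℓ c' ∧ h.IsShadow a1 a2 b1 b2 c' ∧
      ∀ x ∈ h.Qset, c' x = Function.update c a2 γ x := by
  obtain ⟨sh1, sh2, sh3, sh4, sh5⟩ := hsh
  have hγ1 : ∀ s ∈ h.S1, γ ≠ c s := fun s hs => hγ s (h.s1_subset_Qset hs)
  have hγ2 : ∀ s ∈ h.S2, γ ≠ c s := fun s hs => hγ s (h.s2_subset_Qset hs)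
  have hγv2 : γ ≠ c (h.v 2) := hγ _ h.v2_mem_Qset
  have na1v : ∀ i : Fin 6, a1 ≠ h.v i := h.s1_ne_v ha1
  have na2v : ∀ i : Fin 6, a2 ≠ h.v i := h.s1_ne_v ha2
  have nb1v : ∀ i : Fin 6, b1 ≠ h.v i := h.s2_ne_v hb1
  have nb2v : ∀ i : Fin 6, b2 ≠ h.v i := h.s2_ne_v hb2
  have nb1a : b1 ≠ a2 := (h.s1_ne_s2 ha2 hb1).symm
  have nb2a : b2 ≠ a2 := (h.s1_ne_s2 ha2 hb2).symm
  set c1 := Function.update c a2 γ with hc1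
  have hp1 : IsProperColoring G ℓ c1 :=
    h.move_s1 hc ha2 (fun s hs _ => hγ1 s hs) hγ2 (sh1 ▸ hγ2 b1 hb1) (sh2 ▸ hγ2 b2 hb2)
      hγv2 (sh5 ▸ hγv2)
  set c2 := Function.update c1 (h.v 4) γ with hc2
  have e1 : ∀ x, x ≠ a2 → c1 x = c x := fun x hx => Function.update_of_ne hx _ _
  have e2 : ∀ x, x ≠ h.v 4 → c2 x = c1 x := fun x hx => Function.update_of_ne hx _ _
  have hp2 : IsProperColoring G ℓ c2 := by
    apply h.move_v4 hp1
    · intro s hs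
      rw [e1 s (h.s1_ne_s2 ha2 hs).symm]
      exact hγ2 s hs
    · rw [e1 _ (na2v 3).symm, sh3]
      exact hγ1 a1 ha1
    · rw [e1 _ (na2v 5).symm, sh5]
      exact hγv2
  refine ⟨c2, ?_, hp2, ?_, ?_⟩
  · have := (RSeq.single hc hp1).trans (RSeq.single hp1 hp2)
    refine this.mono fun x => ?_
    by_cases hx1 : x = a2
    · subst hx1
      rw [if_pos rfl, if_neg (na2v 4), if_pos (h.host_eq_self ha1 ha2 hb1 hb2
        (h.s1_subset_Qset ha2))]
    · by_cases hx2 : x = h.v 4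
      · subst hx2
        rw [if_neg hx1, if_pos rfl, if_pos (h.host_v4 ha1 ha2 hb1 hb2)]
      · rw [if_neg hx1, if_neg hx2]
        simp
  · refine ⟨?_, ?_, ?_, ?_, ?_⟩
    · rw [e2 (h.v 0) (h.v_ne (by decide)), e1 (h.v 0) (na2v 0).symm, e2 b1 (nb1v 4),
        e1 b1 nb1a]
      exact sh1
    · rw [e2 (h.v 1) (h.v_ne (by decide)), e1 (h.v 1) (na2v 1).symm, e2 b2 (nb2v 4),
        e1 b2 nb2a]
      exact sh2
    · rw [e2 (h.v 3) (h.v_ne (by decide)), e1 (h.v 3) (na2v 3).symm, e2 a1 (na1v 4),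
        e1 a1 haa]
      exact sh3
    · rw [e2 a2 (na2v 4)]
      simp only [hc2, hc1, Function.update_self]
    · rw [e2 (h.v 5) (h.v_ne (by decide)), e1 (h.v 5) (na2v 5).symm,
        e2 (h.v 2) (h.v_ne (by decide)), e1 (h.v 2) (na2v 2).symm]
      exact sh5
  · intro x hx
    rw [e2 x fun hh => h.v_notin_Qset (by decide) (hh ▸ hx)]

theorem syncmove_b1 (hc : IsProperColoring G ℓ c) (hsh : h.IsShadow a1 a2 b1 b2 c)
    {γ : Fin ℓ} (hγ : ∀ x ∈ h.Qset, γ ≠ c x) :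
    ∃ c', RSeq G ℓ c c' (fun x => if h.host a1 a2 b1 b2 x = b1 then 1 else 0) ∧
      IsProperColoring G ℓ c' ∧ h.IsShadow a1 a2 b1 b2 c' ∧
      ∀ x ∈ h.Qset, c' x = Function.update c b1 γ x := by
  obtain ⟨sh1, sh2, sh3, sh4, sh5⟩ := hsh
  have hγ1 : ∀ s ∈ h.S1, γ ≠ c s := fun s hs => hγ s (h.s1_subset_Qset hs)
  have hγ2 : ∀ s ∈ h.S2, γ ≠ c s := fun s hs => hγ s (h.s2_subset_Qset hs)
  have hγv2 : γ ≠ c (h.v 2) := hγ _ h.v2_mem_Qset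
  have na1v : ∀ i : Fin 6, a1 ≠ h.v i := h.s1_ne_v ha1
  have na2v : ∀ i : Fin 6, a2 ≠ h.v i := h.s1_ne_v ha2
  have nb1v : ∀ i : Fin 6, b1 ≠ h.v i := h.s2_ne_v hb1
  have nb2v : ∀ i : Fin 6, b2 ≠ h.v i := h.s2_ne_v hb2
  have na1b : a1 ≠ b1 := h.s1_ne_s2 ha1 hb1
  have na2b : a2 ≠ b1 := h.s1_ne_s2 ha2 hb1
  set c1 := Function.update c b1 γ with hc1
  have hp1 : IsProperColoring G ℓ c1 :=
    h.move_s2 hc hb1 (fun s hs _ => hγ2 s hs) hγ1 hγv2 (sh3 ▸ hγ1 a1 ha1)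
      (sh4 ▸ hγ1 a2 ha2) (sh5 ▸ hγv2)
  set c2 := Function.update c1 (h.v 0) γ with hc2
  have e1 : ∀ x, x ≠ b1 → c1 x = c x := fun x hx => Function.update_of_ne hx _ _
  have e2 : ∀ x, x ≠ h.v 0 → c2 x = c1 x := fun x hx => Function.update_of_ne hx _ _
  have hp2 : IsProperColoring G ℓ c2 := by
    apply h.move_v0 hp1
    · intro s hs
      rw [e1 s (h.s1_ne_s2 hs hb1)]
      exact hγ1 s hs
    · rw [e1 _ (nb1v 1).symm, sh2]
      exact hγ2 b2 hb2
    · rw [e1 _ (nb1v 5).symm, sh5]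
      exact hγv2
  refine ⟨c2, ?_, hp2, ?_, ?_⟩
  · have := (RSeq.single hc hp1).trans (RSeq.single hp1 hp2)
    refine this.mono fun x => ?_
    by_cases hx1 : x = b1
    · subst hx1
      rw [if_pos rfl, if_neg (nb1v 0), if_pos (h.host_eq_self ha1 ha2 hb1 hb2
        (h.s2_subset_Qset hb1))]
    · by_cases hx2 : x = h.v 0
      · subst hx2
        rw [if_neg hx1, if_pos rfl, if_pos (h.host_v0 ha1 ha2 hb1 hb2)]
      · rw [if_neg hx1, if_neg hx2]
        simp
  · refine ⟨?_, ?_, ?_, ?_, ?_⟩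
    · rw [e2 b1 (nb1v 0)]
      simp only [hc2, hc1, Function.update_self]
    · rw [e2 (h.v 1) (h.v_ne (by decide)), e1 (h.v 1) (nb1v 1).symm, e2 b2 (nb2v 0),
        e1 b2 hbb.symm]
      exact sh2
    · rw [e2 (h.v 3) (h.v_ne (by decide)), e1 (h.v 3) (nb1v 3).symm, e2 a1 (na1v 0),
        e1 a1 na1b]
      exact sh3
    · rw [e2 (h.v 4) (h.v_ne (by decide)), e1 (h.v 4) (nb1v 4).symm, e2 a2 (na2v 0),
        e1 a2 na2b]
      exact sh4
    · rw [e2 (h.v 5) (h.v_ne (by decide)), e1 (h.v 5) (nb1v 5).symm,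
        e2 (h.v 2) (h.v_ne (by decide)), e1 (h.v 2) (nb1v 2).symm]
      exact sh5
  · intro x hx
    rw [e2 x fun hh => h.v_notin_Qset (by decide) (hh ▸ hx)]

theorem syncmove_b2 (hc : IsProperColoring G ℓ c) (hsh : h.IsShadow a1 a2 b1 b2 c)
    {γ : Fin ℓ} (hγ : ∀ x ∈ h.Qset, γ ≠ c x) :
    ∃ c', RSeq G ℓ c c' (fun x => if h.host a1 a2 b1 b2 x = b2 then 1 else 0) ∧
      IsProperColoring G ℓ c' ∧ h.IsShadow a1 a2 b1 b2 c' ∧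
      ∀ x ∈ h.Qset, c' x = Function.update c b2 γ x := by
  obtain ⟨sh1, sh2, sh3, sh4, sh5⟩ := hsh
  have hγ1 : ∀ s ∈ h.S1, γ ≠ c s := fun s hs => hγ s (h.s1_subset_Qset hs)
  have hγ2 : ∀ s ∈ h.S2, γ ≠ c s := fun s hs => hγ s (h.s2_subset_Qset hs)
  have hγv2 : γ ≠ c (h.v 2) := hγ _ h.v2_mem_Qset
  have na1v : ∀ i : Fin 6, a1 ≠ h.v i := h.s1_ne_v ha1
  have na2v : ∀ i : Fin 6, a2 ≠ h.v i := h.s1_ne_v ha2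
  have nb1v : ∀ i : Fin 6, b1 ≠ h.v i := h.s2_ne_v hb1
  have nb2v : ∀ i : Fin 6, b2 ≠ h.v i := h.s2_ne_v hb2
  have na1b : a1 ≠ b2 := h.s1_ne_s2 ha1 hb2
  have na2b : a2 ≠ b2 := h.s1_ne_s2 ha2 hb2
  set c1 := Function.update c b2 γ with hc1
  have hp1 : IsProperColoring G ℓ c1 :=
    h.move_s2 hc hb2 (fun s hs _ => hγ2 s hs) hγ1 hγv2 (sh3 ▸ hγ1 a1 ha1)
      (sh4 ▸ hγ1 a2 ha2) (sh5 ▸ hγv2)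
  set c2 := Function.update c1 (h.v 1) γ with hc2
  have e1 : ∀ x, x ≠ b2 → c1 x = c x := fun x hx => Function.update_of_ne hx _ _
  have e2 : ∀ x, x ≠ h.v 1 → c2 x = c1 x := fun x hx => Function.update_of_ne hx _ _
  have hp2 : IsProperColoring G ℓ c2 := by
    apply h.move_v1 hp1
    · intro s hs
      rw [e1 s (h.s1_ne_s2 hs hb2)]
      exact hγ1 s hs
    · rw [e1 _ (nb2v 0).symm, sh1]
      exact hγ2 b1 hb1
    · rw [e1 _ (nb2v 2).symm]
      exact hγv2
  refine ⟨c2, ?_, hp2, ?_, ?_⟩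
  · have := (RSeq.single hc hp1).trans (RSeq.single hp1 hp2)
    refine this.mono fun x => ?_
    by_cases hx1 : x = b2
    · subst hx1
      rw [if_pos rfl, if_neg (nb2v 1), if_pos (h.host_eq_self ha1 ha2 hb1 hb2
        (h.s2_subset_Qset hb2))]
    · by_cases hx2 : x = h.v 1
      · subst hx2
        rw [if_neg hx1, if_pos rfl, if_pos (h.host_v1 ha1 ha2 hb1 hb2)]
      · rw [if_neg hx1, if_neg hx2]
        simp
  · refine ⟨?_, ?_, ?_, ?_, ?_⟩
    · rw [e2 (h.v 0) (h.v_ne (by decide)), e1 (h.v 0) (nb2v 0).symm, e2 b1 (nb1v 1),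
        e1 b1 hbb]
      exact sh1
    · rw [e2 b2 (nb2v 1)]
      simp only [hc2, hc1, Function.update_self]
    · rw [e2 (h.v 3) (h.v_ne (by decide)), e1 (h.v 3) (nb2v 3).symm, e2 a1 (na1v 1),
        e1 a1 na1b]
      exact sh3
    · rw [e2 (h.v 4) (h.v_ne (by decide)), e1 (h.v 4) (nb2v 4).symm, e2 a2 (na2v 1),
        e1 a2 na2b]
      exact sh4
    · rw [e2 (h.v 5) (h.v_ne (by decide)), e1 (h.v 5) (nb2v 5).symm,
        e2 (h.v 2) (h.v_ne (by decide)), e1 (h.v 2) (nb2v 2).symm]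
      exact sh5
  · intro x hx
    rw [e2 x fun hh => h.v_notin_Qset (by decide) (hh ▸ hx)]

theorem syncmove_v2 (hc : IsProperColoring G ℓ c) (hsh : h.IsShadow a1 a2 b1 b2 c)
    {γ : Fin ℓ} (hγ : ∀ x ∈ h.Qset, γ ≠ c x) :
    ∃ c', RSeq G ℓ c c' (fun x => if h.host a1 a2 b1 b2 x = h.v 2 then 1 else 0) ∧
      IsProperColoring G ℓ c' ∧ h.IsShadow a1 a2 b1 b2 c' ∧
      ∀ x ∈ h.Qset, c' x = Function.update c (h.v 2) γ x := by
  obtain ⟨sh1, sh2, sh3, sh4, sh5⟩ := hsh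
  have hγ1 : ∀ s ∈ h.S1, γ ≠ c s := fun s hs => hγ s (h.s1_subset_Qset hs)
  have hγ2 : ∀ s ∈ h.S2, γ ≠ c s := fun s hs => hγ s (h.s2_subset_Qset hs)
  have hγv2 : γ ≠ c (h.v 2) := hγ _ h.v2_mem_Qset
  have na1v : ∀ i : Fin 6, a1 ≠ h.v i := h.s1_ne_v ha1
  have na2v : ∀ i : Fin 6, a2 ≠ h.v i := h.s1_ne_v ha2
  have nb1v : ∀ i : Fin 6, b1 ≠ h.v i := h.s2_ne_v hb1
  have nb2v : ∀ i : Fin 6, b2 ≠ h.v i := h.s2_ne_v hb2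
  set c1 := Function.update c (h.v 2) γ with hc1
  have hp1 : IsProperColoring G ℓ c1 :=
    h.move_v2 hc hγ1 hγ2 (sh2 ▸ hγ2 b2 hb2) (sh3 ▸ hγ1 a1 ha1)
  set c2 := Function.update c1 (h.v 5) γ with hc2
  have e1 : ∀ x, x ≠ h.v 2 → c1 x = c x := fun x hx => Function.update_of_ne hx _ _
  have e2 : ∀ x, x ≠ h.v 5 → c2 x = c1 x := fun x hx => Function.update_of_ne hx _ _
  have hp2 : IsProperColoring G ℓ c2 := by
    apply h.move_v5 hp1
    · intro s hs
      rw [e1 s (h.s1_ne_v hs 2)]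
      exact hγ1 s hs
    · intro s hs
      rw [e1 s (h.s2_ne_v hs 2)]
      exact hγ2 s hs
    · rw [e1 _ (h.v_ne (by decide)), sh4]
      exact hγ1 a2 ha2
    · rw [e1 _ (h.v_ne (by decide)), sh1]
      exact hγ2 b1 hb1
  refine ⟨c2, ?_, hp2, ?_, ?_⟩
  · have := (RSeq.single hc hp1).trans (RSeq.single hp1 hp2)
    refine this.mono fun x => ?_
    by_cases hx1 : x = h.v 2
    · subst hx1
      rw [if_pos rfl, if_neg (h.v_ne (by decide)), if_pos (h.host_eq_self ha1 ha2 hb1 hb2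
        h.v2_mem_Qset)]
    · by_cases hx2 : x = h.v 5
      · subst hx2
        rw [if_neg hx1, if_pos rfl, if_pos (h.host_v5 ha1 ha2 hb1 hb2)]
      · rw [if_neg hx1, if_neg hx2]
        simp
  · refine ⟨?_, ?_, ?_, ?_, ?_⟩
    · rw [e2 (h.v 0) (h.v_ne (by decide)), e1 (h.v 0) (h.v_ne (by decide)), e2 b1 (nb1v 5),
        e1 b1 (nb1v 2)]
      exact sh1
    · rw [e2 (h.v 1) (h.v_ne (by decide)), e1 (h.v 1) (h.v_ne (by decide)), e2 b2 (nb2v 5),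
        e1 b2 (nb2v 2)]
      exact sh2
    · rw [e2 (h.v 3) (h.v_ne (by decide)), e1 (h.v 3) (h.v_ne (by decide)), e2 a1 (na1v 5),
        e1 a1 (na1v 2)]
      exact sh3
    · rw [e2 (h.v 4) (h.v_ne (by decide)), e1 (h.v 4) (h.v_ne (by decide)), e2 a2 (na2v 5),
        e1 a2 (na2v 2)]
      exact sh4
    · rw [e2 (h.v 2) (h.v_ne (by decide))]
      simp only [hc2, hc1, Function.update_self]
  · intro x hx
    rw [e2 x fun hh => h.v_notin_Qset (by decide) (hh ▸ hx)]

theorem syncmove_gen1 (hc : IsProperColoring G ℓ c) (hsh : h.IsShadow a1 a2 b1 b2 c)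
    {q : V} (hq : q ∈ h.S1) (hq1 : q ≠ a1) (hq2 : q ≠ a2)
    {γ : Fin ℓ} (hγ : ∀ x ∈ h.Qset, γ ≠ c x) :
    ∃ c', RSeq G ℓ c c' (fun x => if h.host a1 a2 b1 b2 x = q then 1 else 0) ∧
      IsProperColoring G ℓ c' ∧ h.IsShadow a1 a2 b1 b2 c' ∧
      ∀ x ∈ h.Qset, c' x = Function.update c q γ x := by
  obtain ⟨sh1, sh2, sh3, sh4, sh5⟩ := hsh
  have hγ1 : ∀ s ∈ h.S1, γ ≠ c s := fun s hs => hγ s (h.s1_subset_Qset hs)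
  have hγ2 : ∀ s ∈ h.S2, γ ≠ c s := fun s hs => hγ s (h.s2_subset_Qset hs)
  have hγv2 : γ ≠ c (h.v 2) := hγ _ h.v2_mem_Qset
  set c1 := Function.update c q γ with hc1
  have hp1 : IsProperColoring G ℓ c1 :=
    h.move_s1 hc hq (fun s hs _ => hγ1 s hs) hγ2 (sh1 ▸ hγ2 b1 hb1) (sh2 ▸ hγ2 b2 hb2)
      hγv2 (sh5 ▸ hγv2)
  have e1 : ∀ x, x ≠ q → c1 x = c x := fun x hx => Function.update_of_ne hx _ _
  refine ⟨c1, ?_, hp1, ?_, fun x _ => rfl⟩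
  · refine (RSeq.single hc hp1).mono fun x => ?_
    by_cases hx1 : x = q
    · subst hx1
      rw [if_pos rfl, if_pos (h.host_eq_self ha1 ha2 hb1 hb2 (h.s1_subset_Qset hq))]
    · rw [if_neg hx1]
      simp
  · exact ⟨by rw [e1 _ (h.s1_ne_v hq 0).symm, e1 b1 (h.s1_ne_s2 hq hb1).symm, sh1],
      by rw [e1 _ (h.s1_ne_v hq 1).symm, e1 b2 (h.s1_ne_s2 hq hb2).symm, sh2],
      by rw [e1 _ (h.s1_ne_v hq 3).symm, e1 a1 hq1.symm, sh3],
      by rw [e1 _ (h.s1_ne_v hq 4).symm, e1 a2 hq2.symm, sh4],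
      by rw [e1 _ (h.s1_ne_v hq 5).symm, e1 _ (h.s1_ne_v hq 2).symm, sh5]⟩

theorem syncmove_gen2 (hc : IsProperColoring G ℓ c) (hsh : h.IsShadow a1 a2 b1 b2 c)
    {q : V} (hq : q ∈ h.S2) (hq1 : q ≠ b1) (hq2 : q ≠ b2)
    {γ : Fin ℓ} (hγ : ∀ x ∈ h.Qset, γ ≠ c x) :
    ∃ c', RSeq G ℓ c c' (fun x => if h.host a1 a2 b1 b2 x = q then 1 else 0) ∧
      IsProperColoring G ℓ c' ∧ h.IsShadow a1 a2 b1 b2 c' ∧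
      ∀ x ∈ h.Qset, c' x = Function.update c q γ x := by
  obtain ⟨sh1, sh2, sh3, sh4, sh5⟩ := hsh
  have hγ1 : ∀ s ∈ h.S1, γ ≠ c s := fun s hs => hγ s (h.s1_subset_Qset hs)
  have hγ2 : ∀ s ∈ h.S2, γ ≠ c s := fun s hs => hγ s (h.s2_subset_Qset hs)
  have hγv2 : γ ≠ c (h.v 2) := hγ _ h.v2_mem_Qset
  set c1 := Function.update c q γ with hc1
  have hp1 : IsProperColoring G ℓ c1 :=
    h.move_s2 hc hq (fun s hs _ => hγ2 s hs) hγ1 hγv2 (sh3 ▸ hγ1 a1 ha1)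
      (sh4 ▸ hγ1 a2 ha2) (sh5 ▸ hγv2)
  have e1 : ∀ x, x ≠ q → c1 x = c x := fun x hx => Function.update_of_ne hx _ _
  refine ⟨c1, ?_, hp1, ?_, fun x _ => rfl⟩
  · refine (RSeq.single hc hp1).mono fun x => ?_
    by_cases hx1 : x = q
    · subst hx1
      rw [if_pos rfl, if_pos (h.host_eq_self ha1 ha2 hb1 hb2 (h.s2_subset_Qset hq))]
    · rw [if_neg hx1]
      simp
  · exact ⟨by rw [e1 _ (h.s2_ne_v hq 0).symm, e1 b1 hq1.symm, sh1],
      by rw [e1 _ (h.s2_ne_v hq 1).symm, e1 b2 hq2.symm, sh2],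
      by rw [e1 _ (h.s2_ne_v hq 3).symm, e1 a1 (h.s1_ne_s2 ha1 hq), sh3],
      by rw [e1 _ (h.s2_ne_v hq 4).symm, e1 a2 (h.s1_ne_s2 ha2 hq), sh4],
      by rw [e1 _ (h.s2_ne_v hq 5).symm, e1 _ (h.s2_ne_v hq 2).symm, sh5]⟩

/-- The synchronised move: recolour a clique vertex `q` with a colour `γ` fresh on `Q`,
together with its shadow. -/
theorem syncmove (hc : IsProperColoring G ℓ c) (hsh : h.IsShadow a1 a2 b1 b2 c)
    {q : V} (hq : q ∈ h.Qset) {γ : Fin ℓ} (hγ : ∀ x ∈ h.Qset, γ ≠ c x) :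
    ∃ c', RSeq G ℓ c c' (fun x => if h.host a1 a2 b1 b2 x = q then 1 else 0) ∧
      IsProperColoring G ℓ c' ∧ h.IsShadow a1 a2 b1 b2 c' ∧
      ∀ x ∈ h.Qset, c' x = Function.update c q γ x := by
  rcases h.mem_Qset.1 hq with hq' | hq' | rfl
  · by_cases hq1 : q = a1
    · subst hq1; exact h.syncmove_a1 ha1 ha2 haa hb1 hb2 hbb hc hsh hγ
    · by_cases hq2 : q = a2
      · subst hq2; exact h.syncmove_a2 ha1 ha2 haa hb1 hb2 hbb hc hsh hγ
      · exact h.syncmove_gen1 ha1 ha2 haa hb1 hb2 hbb hc hsh hq' hq1 hq2 hγ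
  · by_cases hq1 : q = b1
    · subst hq1; exact h.syncmove_b1 ha1 ha2 haa hb1 hb2 hbb hc hsh hγ
    · by_cases hq2 : q = b2
      · subst hq2; exact h.syncmove_b2 ha1 ha2 haa hb1 hb2 hbb hc hsh hγ
      · exact h.syncmove_gen2 ha1 ha2 haa hb1 hb2 hbb hc hsh hq' hq1 hq2 hγ
  · exact h.syncmove_v2 ha1 ha2 haa hb1 hb2 hbb hc hsh hγ

end sync
end



section
variable {V : Type*} [DecidableEq V] [Fintype V] {G : SimpleGraph V} (h : H5Data G) {ℓ : ℕ}
variable {a1 a2 b1 b2 : V} {c d : V → Fin ℓ}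
variable (ha1 : a1 ∈ h.S1) (ha2 : a2 ∈ h.S1) (haa : a1 ≠ a2)
  (hb1 : b1 ∈ h.S2) (hb2 : b2 ∈ h.S2) (hbb : b1 ≠ b2)

/-- Bound on the number of recolourings of a clique vertex in the shuffle phase. -/
def Bf (h : H5Data G) [DecidableEq V] {ℓ : ℕ} (c d : V → Fin ℓ) (x : V) : ℕ :=
  if c x = d x then 0
  else if c x ∉ h.Qset.image d ∨ d x ∉ h.Qset.image c then 1 else 2

theorem Bf_le_two (x : V) : h.Bf c d x ≤ 2 := by
  unfold Bf; split_ifs <;> omega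

theorem Bf_pos {x : V} (hx : c x ≠ d x) : 1 ≤ h.Bf c d x := by
  unfold Bf; rw [if_neg hx]; split_ifs <;> omega

theorem Bf_mono_aux {c c' d : V → Fin ℓ} {y : V} (hcy : c' y = c y)
    (him : d y ∉ h.Qset.image c → d y ∉ h.Qset.image c') :
    h.Bf c' d y ≤ h.Bf c d y := by
  unfold Bf
  by_cases h1 : c y = d y
  · rw [if_pos h1, if_pos (hcy.trans h1)]
  · rw [if_neg h1, if_neg (show c' y ≠ d y by rw [hcy]; exact h1)]
    have himp : (c y ∉ h.Qset.image d ∨ d y ∉ h.Qset.image c) →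
        (c' y ∉ h.Qset.image d ∨ d y ∉ h.Qset.image c') := by
      rintro (hA | hB)
      · exact Or.inl (by rw [hcy]; exact hA)
      · exact Or.inr (him hB)
    by_cases hA : c' y ∉ h.Qset.image d ∨ d y ∉ h.Qset.image c'
    · rw [if_pos hA]
      split_ifs <;> omega
    · rw [if_neg hA, if_neg fun hB => hA (himp hB)]

section cliq
include ha1 ha2 haa hb1 hb2 hbb

/-- The clique shuffle: from any shadow colouring to any other, recolouring each clique
vertex at most `Bf` times and each shadow vertex as often as its host. -/
theorem cliq (hl : h.S1.card + h.S2.card + 2 ≤ ℓ)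
    (hd : IsProperColoring G ℓ d) (hshd : h.IsShadow a1 a2 b1 b2 d) :
    ∀ n : ℕ, ∀ c : V → Fin ℓ, IsProperColoring G ℓ c → h.IsShadow a1 a2 b1 b2 c →
      (h.Qset.filter fun x => c x ≠ d x).card ≤ n →
      RSeq G ℓ c d (fun x => h.Bf c d (h.host a1 a2 b1 b2 x)) := by
  intro n
  induction n with
  | zero =>
    intro c hc hsh hcard
    have h0 : ∀ x ∈ h.Qset, c x = d x := by
      intro x hx
      by_contra hne
      have hmem : x ∈ h.Qset.filter fun x => c x ≠ d x := Finset.mem_filter.2 ⟨hx, hne⟩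
      rw [Finset.card_eq_zero.1 (Nat.le_zero.1 hcard)] at hmem
      simp at hmem
    have hcd : c = d := h.eq_of_shadow ha1 ha2 hb1 hb2 hsh hshd h0
    subst hcd
    exact RSeq.refl hc _
  | succ n ih =>
    intro c hc hsh hcard
    by_cases h0 : ∀ x ∈ h.Qset, c x = d x
    · have hcd : c = d := h.eq_of_shadow ha1 ha2 hb1 hb2 hsh hshd h0
      subst hcd
      exact RSeq.refl hc _
    push_neg at h0
    by_cases hdir : ∃ q ∈ h.Qset, c q ≠ d q ∧ d q ∉ h.Qset.image c
    · -- direct move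
      obtain ⟨q, hqQ, hqne, hqim⟩ := hdir
      have hγ : ∀ x ∈ h.Qset, d q ≠ c x := fun x hx he =>
        hqim (he ▸ Finset.mem_image_of_mem c hx)
      obtain ⟨c', hR, hp', hsh', hQ'⟩ := h.syncmove ha1 ha2 haa hb1 hb2 hbb hc hsh hqQ hγ
      have hc'q : c' q = d q := by rw [hQ' q hqQ, Function.update_self]
      have hc'e : ∀ x ∈ h.Qset, x ≠ q → c' x = c x := fun x hx hxq => by
        rw [hQ' x hx, Function.update_of_ne hxq]
      have hcard' : (h.Qset.filter fun x => c' x ≠ d x).card ≤ n := by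
        have hsub : (h.Qset.filter fun x => c' x ≠ d x) ⊆
            (h.Qset.filter fun x => c x ≠ d x).erase q := by
          intro x hx
          obtain ⟨hxQ, hxne⟩ := Finset.mem_filter.1 hx
          have hxq : x ≠ q := by
            rintro rfl
            exact hxne hc'q
          exact Finset.mem_erase.2 ⟨hxq, Finset.mem_filter.2
            ⟨hxQ, by rw [← hc'e x hxQ hxq]; exact hxne⟩⟩
        calc (h.Qset.filter fun x => c' x ≠ d x).card ≤ _ := Finset.card_le_card hsub
          _ = (h.Qset.filter fun x => c x ≠ d x).card - 1 :=
              Finset.card_erase_of_mem (Finset.mem_filter.2 ⟨hqQ, hqne⟩)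
          _ ≤ n := by omega
      refine (hR.trans (ih c' hp' hsh' hcard')).mono fun x => ?_
      have key : ∀ y ∈ h.Qset, (if y = q then 1 else 0) + h.Bf c' d y ≤ h.Bf c d y := by
        intro y hyQ
        by_cases hyq : y = q
        · subst hyq
          rw [if_pos rfl]
          have : h.Bf c' d y = 0 := by unfold Bf; rw [if_pos hc'q]
          rw [this]
          exact h.Bf_pos hqne
        · rw [if_neg hyq, zero_add]
          refine h.Bf_mono_aux (hc'e y hyQ hyq) fun hB hmem => hB ?_
          obtain ⟨z, hzQ, hze⟩ := Finset.mem_image.1 hmem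
          by_cases hzq : z = q
          · rw [hzq, hc'q] at hze
            exact (hyq (h.Qinj hd q hqQ y hyQ hze).symm).elim
          · rw [hc'e z hzQ hzq] at hze
            exact Finset.mem_image.2 ⟨z, hzQ, hze⟩
      exact key _ (h.host_mem ha1 ha2 hb1 hb2 x)
    · -- cycle move
      push_neg at hdir
      have himeq : h.Qset.image d = h.Qset.image c := by
        apply Finset.eq_of_subset_of_card_le
        · intro γ hγ
          obtain ⟨x, hx, rfl⟩ := Finset.mem_image.1 hγ
          by_cases he : c x = d x
          · exact he ▸ Finset.mem_image_of_mem c hx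
          · exact hdir x hx he
        · rw [h.card_image_Q hc, h.card_image_Q hd]
      obtain ⟨x1, hx1Q, hx1ne⟩ := h0
      have hcx1d : c x1 ∈ h.Qset.image d := himeq ▸ Finset.mem_image_of_mem c hx1Q
      obtain ⟨x0, hx0Q, hdx0⟩ := Finset.mem_image.1 hcx1d
      have hx01 : x0 ≠ x1 := by
        rintro rfl
        exact hx1ne hdx0.symm
      have hx0ne : c x0 ≠ d x0 := fun he =>
        hx01 (h.Qinj hc x0 hx0Q x1 hx1Q (he.trans hdx0))
      obtain ⟨f, hf⟩ := h.exists_free hc hl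
      have hfd : f ∉ h.Qset.image d := himeq ▸ hf
      have hγf : ∀ x ∈ h.Qset, f ≠ c x := fun x hx he =>
        hf (he ▸ Finset.mem_image_of_mem c hx)
      obtain ⟨cA, hRA, hpA, hshA, hQA⟩ := h.syncmove ha1 ha2 haa hb1 hb2 hbb hc hsh hx1Q hγf
      have hcAx1 : cA x1 = f := by rw [hQA x1 hx1Q, Function.update_self]
      have hcAe : ∀ x ∈ h.Qset, x ≠ x1 → cA x = c x := fun x hx hxq => by
        rw [hQA x hx, Function.update_of_ne hxq]
      have hγ2 : ∀ x ∈ h.Qset, c x1 ≠ cA x := by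
        intro x hx he
        by_cases hxx : x = x1
        · rw [hxx, hcAx1] at he
          exact hγf x1 hx1Q he.symm
        · rw [hcAe x hx hxx] at he
          exact hxx (h.Qinj hc x hx x1 hx1Q he.symm)
      obtain ⟨cB, hRB, hpB, hshB, hQB⟩ :=
        h.syncmove ha1 ha2 haa hb1 hb2 hbb hpA hshA hx0Q hγ2
      have hcBx0 : cB x0 = d x0 := by rw [hQB x0 hx0Q, Function.update_self, hdx0]
      have hcBx1 : cB x1 = f := by rw [hQB x1 hx1Q, Function.update_of_ne hx01.symm, hcAx1]
      have hcBe : ∀ x ∈ h.Qset, x ≠ x0 → x ≠ x1 → cB x = c x := fun x hx hq0 hq1 => by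
        rw [hQB x hx, Function.update_of_ne hq0, hcAe x hx hq1]
      have hcard' : (h.Qset.filter fun x => cB x ≠ d x).card ≤ n := by
        have hsub : (h.Qset.filter fun x => cB x ≠ d x) ⊆
            (h.Qset.filter fun x => c x ≠ d x).erase x0 := by
          intro x hx
          obtain ⟨hxQ, hxne⟩ := Finset.mem_filter.1 hx
          have hxq : x ≠ x0 := by
            rintro rfl
            exact hxne hcBx0
          refine Finset.mem_erase.2 ⟨hxq, Finset.mem_filter.2 ⟨hxQ, ?_⟩⟩
          by_cases hx1' : x = x1
          · subst hx1'
            exact hx1ne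
          · rw [← hcBe x hxQ hxq hx1']
            exact hxne
        calc (h.Qset.filter fun x => cB x ≠ d x).card ≤ _ := Finset.card_le_card hsub
          _ = (h.Qset.filter fun x => c x ≠ d x).card - 1 :=
              Finset.card_erase_of_mem (Finset.mem_filter.2 ⟨hx0Q, hx0ne⟩)
          _ ≤ n := by omega
      refine ((hRA.trans hRB).trans (ih cB hpB hshB hcard')).mono fun x => ?_
      have key : ∀ y ∈ h.Qset,
          ((if y = x1 then 1 else 0) + if y = x0 then 1 else 0) + h.Bf cB d y ≤
            h.Bf c d y := by
        intro y hyQ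
        by_cases hy1 : y = x1
        · subst hy1
          rw [if_pos rfl, if_neg (Ne.symm hx01)]
          have hB1 : h.Bf cB d y = 1 := by
            unfold Bf
            rw [if_neg, if_pos]
            · exact Or.inl (by rw [hcBx1]; exact hfd)
            · rw [hcBx1]
              intro he
              exact hfd (he ▸ Finset.mem_image_of_mem d hyQ)
          have hB2 : h.Bf c d y = 2 := by
            unfold Bf
            rw [if_neg hx1ne, if_neg]
            push_neg
            exact ⟨hcx1d, himeq ▸ Finset.mem_image_of_mem d hyQ⟩
          omega
        · by_cases hy0 : y = x0
          · subst hy0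
            rw [if_neg hy1, if_pos rfl]
            have hB0 : h.Bf cB d y = 0 := by unfold Bf; rw [if_pos hcBx0]
            have := h.Bf_pos (c := c) (d := d) hx0ne
            omega
          · rw [if_neg hy1, if_neg hy0, add_zero, zero_add]
            refine h.Bf_mono_aux (hcBe y hyQ hy0 hy1) fun hB hmem => hB ?_
            obtain ⟨z, hzQ, hze⟩ := Finset.mem_image.1 hmem
            by_cases hz0 : z = x0
            · rw [hz0, hcBx0] at hze
              exact (hy0 (h.Qinj hd x0 hx0Q y hyQ hze).symm).elim
            · by_cases hz1 : z = x1
              · rw [hz1, hcBx1] at hze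
                exact (hfd (hze ▸ Finset.mem_image_of_mem d hyQ)).elim
              · rw [hcBe z hzQ hz0 hz1] at hze
                exact Finset.mem_image.2 ⟨z, hzQ, hze⟩
      exact key _ (h.host_mem ha1 ha2 hb1 hb2 x)

end cliq
end



section
variable {V : Type*} [DecidableEq V] [Fintype V] {G : SimpleGraph V} (h : H5Data G) {ℓ : ℕ}
variable {a1 a2 b1 b2 : V} {c : V → Fin ℓ}
variable (ha1 : a1 ∈ h.S1) (ha2 : a2 ∈ h.S1) (haa : a1 ≠ a2)
  (hb1 : b1 ∈ h.S2) (hb2 : b2 ∈ h.S2) (hbb : b1 ≠ b2)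

theorem countAux2 {w1 w2 : V} (hw : w1 ≠ w2) (x : V) :
    ((if x = w1 then 1 else 0) + if x = w2 then 1 else 0) ≤
      if x = w1 ∨ x = w2 then 2 else 0 := by
  by_cases h1 : x = w1
  · have h2 : x ≠ w2 := fun hh => hw (h1.symm.trans hh)
    rw [if_pos h1, if_neg h2, if_pos (Or.inl h1)]
    try omega
  · by_cases h2 : x = w2
    · rw [if_neg h1, if_pos h2, if_pos (Or.inr h2)]
      try omega
    · rw [if_neg h1, if_neg h2, if_neg (by tauto)]
      try omega

theorem countAux3 {w1 w2 : V} (hw : w1 ≠ w2) (x : V) :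
    (((if x = w1 then 1 else 0) + if x = w2 then 1 else 0) + if x = w1 then 1 else 0) ≤
      if x = w1 ∨ x = w2 then 2 else 0 := by
  by_cases h1 : x = w1
  · have h2 : x ≠ w2 := fun hh => hw (h1.symm.trans hh)
    rw [if_pos h1, if_neg h2, if_pos (Or.inl h1)]
    try omega
  · by_cases h2 : x = w2
    · rw [if_neg h1, if_pos h2, if_pos (Or.inr h2)]
      try omega
    · rw [if_neg h1, if_neg h2, if_neg (by tauto)]
      try omega

theorem countAux3' {w1 w2 : V} (hw : w1 ≠ w2) (x : V) :
    (((if x = w1 then 1 else 0) + if x = w2 then 1 else 0) + if x = w1 then 1 else 0) ≤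
      if x = w2 ∨ x = w1 then 2 else 0 := by
  by_cases h1 : x = w1
  · have h2 : x ≠ w2 := fun hh => hw (h1.symm.trans hh)
    rw [if_pos h1, if_neg h2, if_pos (Or.inr h1)]
    try omega
  · by_cases h2 : x = w2
    · rw [if_neg h1, if_pos h2, if_pos (Or.inl h2)]
      try omega
    · rw [if_neg h1, if_neg h2, if_neg (by tauto)]
      try omega

section blocks
include ha1 ha2 haa

/-- Entry phase, block A: put `v₃, v₄` onto the colours of `a₁, a₂`. -/
theorem blockA (hc : IsProperColoring G ℓ c) (hl : h.S1.card + h.S2.card + 2 ≤ ℓ) :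
    RSeq G ℓ c (Function.update (Function.update c (h.v 3) (c a1)) (h.v 4) (c a2))
      (fun x => if x = h.v 3 ∨ x = h.v 4 then 2 else 0) ∧
    IsProperColoring G ℓ
      (Function.update (Function.update c (h.v 3) (c a1)) (h.v 4) (c a2)) := by
  have n34 : h.v 3 ≠ h.v 4 := h.v_ne (by decide)
  have na1s2 : ∀ s ∈ h.S2, c a1 ≠ c s := fun s hs => hc (h.adj_s1s2 ha1 hs)
  have na2s2 : ∀ s ∈ h.S2, c a2 ≠ c s := fun s hs => hc (h.adj_s1s2 ha2 hs)
  have na1v2 : c a1 ≠ c (h.v 2) := hc (h.adj_s1v ha1 (by decide))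
  have na2v2 : c a2 ≠ c (h.v 2) := hc (h.adj_s1v ha2 (by decide))
  have na2v5 : c a2 ≠ c (h.v 5) := hc (h.adj_s1v ha2 (by decide))
  have na12 : c a1 ≠ c a2 := hc (h.adj_s1s1 ha1 ha2 haa)
  have hs2v : ∀ s ∈ h.S2, ∀ i : Fin 6, s ≠ h.v i := fun s hs => h.s2_ne_v hs
  by_cases hA : c (h.v 4) = c a1
  · by_cases hB : c (h.v 3) = c a2
    · -- deadlock: go through a free colour
      obtain ⟨f, hf⟩ := h.exists_free hc hl
      have hfQ : ∀ x ∈ h.Qset, f ≠ c x := fun x hx he =>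
        hf (he ▸ Finset.mem_image_of_mem c hx)
      set d1 := Function.update c (h.v 3) f with hd1
      have p1 : IsProperColoring G ℓ d1 :=
        h.move_v3 hc (fun s hs => hfQ s (h.s2_subset_Qset hs)) (hfQ _ h.v2_mem_Qset)
          (hA ▸ hfQ a1 (h.s1_subset_Qset ha1))
      have e1 : ∀ x, x ≠ h.v 3 → d1 x = c x := fun x hx => Function.update_of_ne hx _ _
      set d2 := Function.update d1 (h.v 4) (c a2) with hd2
      have p2 : IsProperColoring G ℓ d2 := by
        apply h.move_v4 p1
        · intro s hs
          rw [e1 s (hs2v s hs 3)]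
          exact na2s2 s hs
        · rw [hd1, Function.update_self]
          exact (hfQ a2 (h.s1_subset_Qset ha2)).symm
        · rw [e1 _ (h.v_ne (by decide))]
          exact na2v5
      have e2 : ∀ x, x ≠ h.v 4 → d2 x = d1 x := fun x hx => Function.update_of_ne hx _ _
      set d3 := Function.update d2 (h.v 3) (c a1) with hd3
      have p3 : IsProperColoring G ℓ d3 := by
        apply h.move_v3 p2
        · intro s hs
          rw [e2 s (hs2v s hs 4), e1 s (hs2v s hs 3)]
          exact na1s2 s hs
        · rw [e2 _ (h.v_ne (by decide)), e1 _ (h.v_ne (by decide))]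
          exact na1v2
        · rw [hd2, Function.update_self]
          exact na12
      have hfin : d3 = Function.update (Function.update c (h.v 3) (c a1)) (h.v 4) (c a2) := by
        rw [hd3, hd2, hd1, Function.update_comm n34.symm, Function.update_idem]
      refine ⟨?_, hfin ▸ p3⟩
      have := ((RSeq.single hc p1).trans (RSeq.single p1 p2)).trans (RSeq.single p2 p3)
      rw [← hd3, hfin] at this
      exact this.mono (countAux3 n34 ·)
    · -- v4 first, then v3
      set d1 := Function.update c (h.v 4) (c a2) with hd1
      have p1 : IsProperColoring G ℓ d1 :=
        h.move_v4 hc na2s2 (fun he => hB he.symm) na2v5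
      have e1 : ∀ x, x ≠ h.v 4 → d1 x = c x := fun x hx => Function.update_of_ne hx _ _
      set d2 := Function.update d1 (h.v 3) (c a1) with hd2
      have p2 : IsProperColoring G ℓ d2 := by
        apply h.move_v3 p1
        · intro s hs
          rw [e1 s (hs2v s hs 4)]
          exact na1s2 s hs
        · rw [e1 _ (h.v_ne (by decide))]
          exact na1v2
        · rw [hd1, Function.update_self]
          exact na12
      have hfin : d2 = Function.update (Function.update c (h.v 3) (c a1)) (h.v 4) (c a2) := by
        rw [hd2, hd1, Function.update_comm n34.symm]
      refine ⟨?_, hfin ▸ p2⟩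
      have := (RSeq.single hc p1).trans (RSeq.single p1 p2)
      rw [← hd2, hfin] at this
      refine this.mono fun x => le_trans (le_of_eq (add_comm _ _)) (countAux2 n34 x)
  · -- v3 first, then v4
    set d1 := Function.update c (h.v 3) (c a1) with hd1
    have p1 : IsProperColoring G ℓ d1 :=
      h.move_v3 hc na1s2 na1v2 (fun he => hA he.symm)
    have e1 : ∀ x, x ≠ h.v 3 → d1 x = c x := fun x hx => Function.update_of_ne hx _ _
    set d2 := Function.update d1 (h.v 4) (c a2) with hd2
    have p2 : IsProperColoring G ℓ d2 := by
      apply h.move_v4 p1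
      · intro s hs
        rw [e1 s (hs2v s hs 3)]
        exact na2s2 s hs
      · rw [hd1, Function.update_self]
        exact na12.symm
      · rw [e1 _ (h.v_ne (by decide))]
        exact na2v5
    exact ⟨((RSeq.single hc p1).trans (RSeq.single p1 p2)).mono (countAux2 n34 ·), p2⟩

end blocks

section blocksB
include hb1 hb2 hbb

/-- Entry phase, block B: put `v₀, v₁` onto the colours of `b₁, b₂`. -/
theorem blockB (hc : IsProperColoring G ℓ c) (hl : h.S1.card + h.S2.card + 2 ≤ ℓ) :
    RSeq G ℓ c (Function.update (Function.update c (h.v 0) (c b1)) (h.v 1) (c b2))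
      (fun x => if x = h.v 0 ∨ x = h.v 1 then 2 else 0) ∧
    IsProperColoring G ℓ
      (Function.update (Function.update c (h.v 0) (c b1)) (h.v 1) (c b2)) := by
  have n01 : h.v 0 ≠ h.v 1 := h.v_ne (by decide)
  have nb1s1 : ∀ s ∈ h.S1, c b1 ≠ c s := fun s hs => (hc (h.adj_s1s2 hs hb1)).symm
  have nb2s1 : ∀ s ∈ h.S1, c b2 ≠ c s := fun s hs => (hc (h.adj_s1s2 hs hb2)).symm
  have nb1v5 : c b1 ≠ c (h.v 5) := hc (h.adj_s2v hb1 (by decide))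
  have nb2v2 : c b2 ≠ c (h.v 2) := hc (h.adj_s2v hb2 (by decide))
  have nb12 : c b1 ≠ c b2 := hc (h.adj_s2s2 hb1 hb2 hbb)
  have hs1v : ∀ s ∈ h.S1, ∀ i : Fin 6, s ≠ h.v i := fun s hs => h.s1_ne_v hs
  by_cases hA : c (h.v 1) = c b1
  · by_cases hB : c (h.v 0) = c b2
    · obtain ⟨f, hf⟩ := h.exists_free hc hl
      have hfQ : ∀ x ∈ h.Qset, f ≠ c x := fun x hx he =>
        hf (he ▸ Finset.mem_image_of_mem c hx)
      set d1 := Function.update c (h.v 1) f with hd1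
      have p1 : IsProperColoring G ℓ d1 :=
        h.move_v1 hc (fun s hs => hfQ s (h.s1_subset_Qset hs))
          (hB ▸ hfQ b2 (h.s2_subset_Qset hb2)) (hfQ _ h.v2_mem_Qset)
      have e1 : ∀ x, x ≠ h.v 1 → d1 x = c x := fun x hx => Function.update_of_ne hx _ _
      set d2 := Function.update d1 (h.v 0) (c b1) with hd2
      have p2 : IsProperColoring G ℓ d2 := by
        apply h.move_v0 p1
        · intro s hs
          rw [e1 s (hs1v s hs 1)]
          exact nb1s1 s hs
        · rw [hd1, Function.update_self]
          exact (hfQ b1 (h.s2_subset_Qset hb1)).symm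
        · rw [e1 _ (h.v_ne (by decide))]
          exact nb1v5
      have e2 : ∀ x, x ≠ h.v 0 → d2 x = d1 x := fun x hx => Function.update_of_ne hx _ _
      set d3 := Function.update d2 (h.v 1) (c b2) with hd3
      have p3 : IsProperColoring G ℓ d3 := by
        apply h.move_v1 p2
        · intro s hs
          rw [e2 s (hs1v s hs 0), e1 s (hs1v s hs 1)]
          exact nb2s1 s hs
        · rw [hd2, Function.update_self]
          exact nb12.symm
        · rw [e2 _ (h.v_ne (by decide)), e1 _ (h.v_ne (by decide))]
          exact nb2v2
      have hfin : d3 = Function.update (Function.update c (h.v 0) (c b1)) (h.v 1) (c b2) := by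
        rw [hd3, hd2, hd1, Function.update_comm n01, Function.update_idem, Function.update_comm n01.symm]
      refine ⟨?_, hfin ▸ p3⟩
      have := ((RSeq.single hc p1).trans (RSeq.single p1 p2)).trans (RSeq.single p2 p3)
      rw [← hd3, hfin] at this
      exact this.mono (countAux3' (h.v_ne (by decide) : h.v 1 ≠ h.v 0) ·)
    · set d1 := Function.update c (h.v 1) (c b2) with hd1
      have p1 : IsProperColoring G ℓ d1 :=
        h.move_v1 hc nb2s1 (fun he => hB he.symm) nb2v2
      have e1 : ∀ x, x ≠ h.v 1 → d1 x = c x := fun x hx => Function.update_of_ne hx _ _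
      set d2 := Function.update d1 (h.v 0) (c b1) with hd2
      have p2 : IsProperColoring G ℓ d2 := by
        apply h.move_v0 p1
        · intro s hs
          rw [e1 s (hs1v s hs 1)]
          exact nb1s1 s hs
        · rw [hd1, Function.update_self]
          exact nb12
        · rw [e1 _ (h.v_ne (by decide))]
          exact nb1v5
      have hfin : d2 = Function.update (Function.update c (h.v 0) (c b1)) (h.v 1) (c b2) := by
        rw [hd2, hd1, Function.update_comm n01]
      refine ⟨?_, hfin ▸ p2⟩
      have := (RSeq.single hc p1).trans (RSeq.single p1 p2)
      rw [← hd2, hfin] at this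
      refine this.mono fun x => le_trans (le_of_eq (add_comm _ _)) (countAux2 n01 x)
  · set d1 := Function.update c (h.v 0) (c b1) with hd1
    have p1 : IsProperColoring G ℓ d1 :=
      h.move_v0 hc nb1s1 (fun he => hA he.symm) nb1v5
    have e1 : ∀ x, x ≠ h.v 0 → d1 x = c x := fun x hx => Function.update_of_ne hx _ _
    set d2 := Function.update d1 (h.v 1) (c b2) with hd2
    have p2 : IsProperColoring G ℓ d2 := by
      apply h.move_v1 p1
      · intro s hs
        rw [e1 s (hs1v s hs 0)]
        exact nb2s1 s hs
      · rw [hd1, Function.update_self]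
        exact nb12.symm
      · rw [e1 _ (h.v_ne (by decide))]
        exact nb2v2
    exact ⟨((RSeq.single hc p1).trans (RSeq.single p1 p2)).mono (countAux2 n01 ·), p2⟩

end blocksB
end



section
variable {V : Type*} [DecidableEq V] [Fintype V] {G : SimpleGraph V} (h : H5Data G) {ℓ : ℕ}
variable {a1 a2 b1 b2 : V} {φ : V → Fin ℓ}
variable (ha1 : a1 ∈ h.S1) (ha2 : a2 ∈ h.S1) (haa : a1 ≠ a2)
  (hb1 : b1 ∈ h.S2) (hb2 : b2 ∈ h.S2) (hbb : b1 ≠ b2)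

section entry
include ha1 ha2 haa hb1 hb2 hbb

/-- The entry phase: reach a shadow colouring without touching the clique, recolouring
each outer vertex at most twice. -/
theorem entry (hφ : IsProperColoring G ℓ φ) (hl : h.S1.card + h.S2.card + 2 ≤ ℓ) :
    ∃ φ', RSeq G ℓ φ φ' (fun x => if x ∈ h.Qset then 0 else 2) ∧
      IsProperColoring G ℓ φ' ∧ h.IsShadow a1 a2 b1 b2 φ' ∧
      ∀ x ∈ h.Qset, φ' x = φ x := by
  have na1v : ∀ i : Fin 6, a1 ≠ h.v i := h.s1_ne_v ha1
  have na2v : ∀ i : Fin 6, a2 ≠ h.v i := h.s1_ne_v ha2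
  have nb1v : ∀ i : Fin 6, b1 ≠ h.v i := h.s2_ne_v hb1
  have nb2v : ∀ i : Fin 6, b2 ≠ h.v i := h.s2_ne_v hb2
  obtain ⟨RA, pA⟩ := h.blockA ha1 ha2 haa hφ hl
  set c3 := Function.update (Function.update φ (h.v 3) (φ a1)) (h.v 4) (φ a2) with hc3
  have e3 : ∀ x, x ≠ h.v 3 → x ≠ h.v 4 → c3 x = φ x := fun x hx3 hx4 => by
    rw [hc3, Function.update_of_ne hx4, Function.update_of_ne hx3]
  have hc3v3 : c3 (h.v 3) = φ a1 := by
    rw [hc3, Function.update_of_ne (h.v_ne (by decide)), Function.update_self]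
  have hc3v4 : c3 (h.v 4) = φ a2 := by rw [hc3, Function.update_self]
  obtain ⟨RB, pB⟩ := h.blockB hb1 hb2 hbb pA hl
  set c5 := Function.update (Function.update c3 (h.v 0) (c3 b1)) (h.v 1) (c3 b2) with hc5
  have e5 : ∀ x, x ≠ h.v 0 → x ≠ h.v 1 → c5 x = c3 x := fun x hx0 hx1 => by
    rw [hc5, Function.update_of_ne hx1, Function.update_of_ne hx0]
  have hc5v0 : c5 (h.v 0) = c3 b1 := by
    rw [hc5, Function.update_of_ne (h.v_ne (by decide)), Function.update_self]
  have hc5v1 : c5 (h.v 1) = c3 b2 := by rw [hc5, Function.update_self]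
  have hb1e : c5 b1 = φ b1 := by rw [e5 b1 (nb1v 0) (nb1v 1), e3 b1 (nb1v 3) (nb1v 4)]
  have hb2e : c5 b2 = φ b2 := by rw [e5 b2 (nb2v 0) (nb2v 1), e3 b2 (nb2v 3) (nb2v 4)]
  have ha1e : c5 a1 = φ a1 := by rw [e5 a1 (na1v 0) (na1v 1), e3 a1 (na1v 3) (na1v 4)]
  have ha2e : c5 a2 = φ a2 := by rw [e5 a2 (na2v 0) (na2v 1), e3 a2 (na2v 3) (na2v 4)]
  have hv2e : c5 (h.v 2) = φ (h.v 2) := by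
    rw [e5 _ (h.v_ne (by decide)) (h.v_ne (by decide)),
      e3 _ (h.v_ne (by decide)) (h.v_ne (by decide))]
  have hv5e : c5 (h.v 5) = φ (h.v 5) := by
    rw [e5 _ (h.v_ne (by decide)) (h.v_ne (by decide)),
      e3 _ (h.v_ne (by decide)) (h.v_ne (by decide))]
  -- block C : recolour v5 to the colour of v2
  have pC : IsProperColoring G ℓ (Function.update c5 (h.v 5) (c5 (h.v 2))) := by
    apply h.move_v5 pB
    · intro s hs
      exact (pB (h.adj_s1v hs (by decide))).symm
    · intro s hs
      exact (pB (h.adj_s2v hs (by decide))).symm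
    · have : c5 (h.v 4) = c5 a2 := by
        rw [e5 _ (h.v_ne (by decide)) (h.v_ne (by decide)), hc3v4, ha2e]
      rw [this]
      exact (pB (h.adj_s1v ha2 (by decide))).symm
    · have hc3b1 : c3 b1 = φ b1 := e3 b1 (nb1v 3) (nb1v 4)
      rw [hc5v0, hc3b1, hv2e]
      exact (hφ (h.adj_s2v hb1 (by decide))).symm
  set φ' := Function.update c5 (h.v 5) (c5 (h.v 2)) with hφ'
  have e' : ∀ x, x ≠ h.v 5 → φ' x = c5 x := fun x hx => Function.update_of_ne hx _ _
  have hRC : RSeq G ℓ c5 φ' (fun x => if x = h.v 5 then 1 else 0) := RSeq.single pB pC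
  refine ⟨φ', ?_, pC, ?_, ?_⟩
  · refine ((RA.trans RB).trans hRC).mono fun x => ?_
    by_cases hxQ : x ∈ h.Qset
    · have hne : ∀ i : Fin 6, i ≠ 2 → x ≠ h.v i := fun i hi hh =>
        h.v_notin_Qset hi (hh ▸ hxQ)
      rw [if_pos hxQ, if_neg (fun hor => hor.elim (hne 3 (by decide)) (hne 4 (by decide))),
        if_neg (fun hor => hor.elim (hne 0 (by decide)) (hne 1 (by decide))),
        if_neg (hne 5 (by decide))]
    · rw [if_neg hxQ]
      rcases h.cover x with (hx | hx) | ⟨i, rfl⟩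
      · exact absurd (h.s1_subset_Qset hx) hxQ
      · exact absurd (h.s2_subset_Qset hx) hxQ
      rcases (by decide : ∀ j : Fin 6, j = 0 ∨ j = 1 ∨ j = 2 ∨ j = 3 ∨ j = 4 ∨ j = 5) i with
        rfl | rfl | rfl | rfl | rfl | rfl
      · rw [if_neg (fun hor => hor.elim (h.v_ne (by decide)) (h.v_ne (by decide))),
          if_pos (Or.inl rfl), if_neg (h.v_ne (by decide))]
      · rw [if_neg (fun hor => hor.elim (h.v_ne (by decide)) (h.v_ne (by decide))),
          if_pos (Or.inr rfl), if_neg (h.v_ne (by decide))]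
      · exact absurd h.v2_mem_Qset hxQ
      · rw [if_pos (Or.inl rfl),
          if_neg (fun hor => hor.elim (h.v_ne (by decide)) (h.v_ne (by decide))),
          if_neg (h.v_ne (by decide))]
      · rw [if_pos (Or.inr rfl),
          if_neg (fun hor => hor.elim (h.v_ne (by decide)) (h.v_ne (by decide))),
          if_neg (h.v_ne (by decide))]
      · rw [if_neg (fun hor => hor.elim (h.v_ne (by decide)) (h.v_ne (by decide))),
          if_neg (fun hor => hor.elim (h.v_ne (by decide)) (h.v_ne (by decide))),
          if_pos rfl]
        omega
  · refine ⟨?_, ?_, ?_, ?_, ?_⟩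
    · rw [e' _ (h.v_ne (by decide)), e' b1 (nb1v 5), hc5v0, hb1e,
        e3 b1 (nb1v 3) (nb1v 4)]
    · rw [e' _ (h.v_ne (by decide)), e' b2 (nb2v 5), hc5v1, hb2e,
        e3 b2 (nb2v 3) (nb2v 4)]
    · rw [e' _ (h.v_ne (by decide)), e' a1 (na1v 5),
        e5 _ (h.v_ne (by decide)) (h.v_ne (by decide)), hc3v3, ha1e]
    · rw [e' _ (h.v_ne (by decide)), e' a2 (na2v 5),
        e5 _ (h.v_ne (by decide)) (h.v_ne (by decide)), hc3v4, ha2e]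
    · rw [hφ', Function.update_self, Function.update_of_ne (h.v_ne (by decide))]
  · intro x hx
    have hne : ∀ i : Fin 6, i ≠ 2 → x ≠ h.v i := fun i hi hh =>
      h.v_notin_Qset hi (hh ▸ hx)
    rw [e' x (hne 5 (by decide)), e5 x (hne 0 (by decide)) (hne 1 (by decide)),
      e3 x (hne 3 (by decide)) (hne 4 (by decide))]

/-- Full connection with per-vertex bound 6. -/
theorem connect (hl : h.S1.card + h.S2.card + 2 ≤ ℓ) {φ ψ : V → Fin ℓ}
    (hφ : IsProperColoring G ℓ φ) (hψ : IsProperColoring G ℓ ψ) :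
    RSeq G ℓ φ ψ (fun _ => 6) := by
  obtain ⟨φ', Rφ, pφ, shφ, hQφ⟩ := h.entry ha1 ha2 haa hb1 hb2 hbb hφ hl
  obtain ⟨ψ', Rψ, pψ, shψ, hQψ⟩ := h.entry ha1 ha2 haa hb1 hb2 hbb hψ hl
  have Rmid : RSeq G ℓ φ' ψ'
      (fun x => h.Bf φ' ψ' (h.host a1 a2 b1 b2 x)) :=
    h.cliq ha1 ha2 haa hb1 hb2 hbb hl pψ shψ h.Qset.card φ' pφ shφ
      (Finset.card_le_card (Finset.filter_subset _ _))
  refine ((Rφ.trans Rmid).trans Rψ.symm).mono fun x => ?_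
  have h1 : (if x ∈ h.Qset then 0 else 2) ≤ 2 := by split_ifs <;> omega
  have h2 := h.Bf_le_two (c := φ') (d := ψ') (h.host a1 a2 b1 b2 x)
  omega

end entry
end



section
variable {V : Type*} [DecidableEq V] [Fintype V] {G : SimpleGraph V} (h : H5Data G)

/-- Base colour function on the cliques. -/
noncomputable def colfun1 (h : H5Data G) [DecidableEq V] : V → ℕ := fun x =>
  if hx : x ∈ h.S1 then (h.S1.equivFin ⟨x, hx⟩ : ℕ) + 1
  else if hx : x ∈ h.S2 then (h.S2.equivFin ⟨x, hx⟩ : ℕ) + h.S1.card + 1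
  else 0

/-- Colour function realizing the chromatic number. -/
noncomputable def colfun (h : H5Data G) [DecidableEq V] (a1 a2 b1 b2 : V) : V → ℕ := fun x =>
  if x = h.v 0 then h.colfun1 b1 else if x = h.v 1 then h.colfun1 b2
  else if x = h.v 3 then h.colfun1 a1 else if x = h.v 4 then h.colfun1 a2
  else h.colfun1 x

theorem colfun1_mem1 {x} (hx : x ∈ h.S1) :
    h.colfun1 x = (h.S1.equivFin ⟨x, hx⟩ : ℕ) + 1 := dif_pos hx

theorem colfun1_mem2 {x} (hx : x ∈ h.S2) :
    h.colfun1 x = (h.S2.equivFin ⟨x, hx⟩ : ℕ) + h.S1.card + 1 := by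
  rw [colfun1, dif_neg (fun hx1 => Finset.disjoint_left.1 h.d12 hx1 hx), dif_pos hx]

theorem colfun1_R1 {x} (hx : x ∈ h.S1) :
    1 ≤ h.colfun1 x ∧ h.colfun1 x ≤ h.S1.card := by
  rw [h.colfun1_mem1 hx]
  have := (h.S1.equivFin ⟨x, hx⟩).is_lt
  omega

theorem colfun1_R2 {x} (hx : x ∈ h.S2) :
    h.S1.card + 1 ≤ h.colfun1 x ∧ h.colfun1 x ≤ h.S1.card + h.S2.card := by
  rw [h.colfun1_mem2 hx]
  have := (h.S2.equivFin ⟨x, hx⟩).is_lt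
  omega

theorem colfun1_v (i : Fin 6) : h.colfun1 (h.v i) = 0 := by
  rw [colfun1, dif_neg (h.notin i).1, dif_neg (h.notin i).2]

theorem colfun1_inj1 {x y} (hx : x ∈ h.S1) (hy : y ∈ h.S1)
    (he : h.colfun1 x = h.colfun1 y) : x = y := by
  rw [h.colfun1_mem1 hx, h.colfun1_mem1 hy] at he
  have : h.S1.equivFin ⟨x, hx⟩ = h.S1.equivFin ⟨y, hy⟩ := Fin.ext (by omega)
  have := h.S1.equivFin.injective this
  exact congrArg Subtype.val this

theorem colfun1_inj2 {x y} (hx : x ∈ h.S2) (hy : y ∈ h.S2)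
    (he : h.colfun1 x = h.colfun1 y) : x = y := by
  rw [h.colfun1_mem2 hx, h.colfun1_mem2 hy] at he
  have : h.S2.equivFin ⟨x, hx⟩ = h.S2.equivFin ⟨y, hy⟩ := Fin.ext (by omega)
  have := h.S2.equivFin.injective this
  exact congrArg Subtype.val this

variable {a1 a2 b1 b2 : V}
variable (ha1 : a1 ∈ h.S1) (ha2 : a2 ∈ h.S1) (haa : a1 ≠ a2)
  (hb1 : b1 ∈ h.S2) (hb2 : b2 ∈ h.S2) (hbb : b1 ≠ b2)

theorem colfun_S {x} (hx : x ∈ h.S1 ∨ x ∈ h.S2) :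
    h.colfun a1 a2 b1 b2 x = h.colfun1 x := by
  have hne : ∀ i : Fin 6, x ≠ h.v i := fun i =>
    hx.elim (fun hh => h.s1_ne_v hh i) (fun hh => h.s2_ne_v hh i)
  rw [colfun, if_neg (hne 0), if_neg (hne 1), if_neg (hne 3), if_neg (hne 4)]

theorem colfun_v0 : h.colfun a1 a2 b1 b2 (h.v 0) = h.colfun1 b1 := by
  rw [colfun, if_pos rfl]
theorem colfun_v1 : h.colfun a1 a2 b1 b2 (h.v 1) = h.colfun1 b2 := by
  rw [colfun, if_neg (h.v_ne (by decide)), if_pos rfl]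
theorem colfun_v2 : h.colfun a1 a2 b1 b2 (h.v 2) = 0 := by
  rw [colfun, if_neg (h.v_ne (by decide)), if_neg (h.v_ne (by decide)),
    if_neg (h.v_ne (by decide)), if_neg (h.v_ne (by decide)), colfun1_v]
theorem colfun_v3 : h.colfun a1 a2 b1 b2 (h.v 3) = h.colfun1 a1 := by
  rw [colfun, if_neg (h.v_ne (by decide)), if_neg (h.v_ne (by decide)), if_pos rfl]
theorem colfun_v4 : h.colfun a1 a2 b1 b2 (h.v 4) = h.colfun1 a2 := by
  rw [colfun, if_neg (h.v_ne (by decide)), if_neg (h.v_ne (by decide)),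
    if_neg (h.v_ne (by decide)), if_pos rfl]
theorem colfun_v5 : h.colfun a1 a2 b1 b2 (h.v 5) = 0 := by
  rw [colfun, if_neg (h.v_ne (by decide)), if_neg (h.v_ne (by decide)),
    if_neg (h.v_ne (by decide)), if_neg (h.v_ne (by decide)), colfun1_v]

section withmem
include ha1 ha2 hb1 hb2

theorem colfun_lt (x : V) :
    h.colfun a1 a2 b1 b2 x < h.S1.card + h.S2.card + 1 := by
  have hR1 := h.colfun1_R1 ha1
  have hR2 := h.colfun1_R1 ha2
  have hR3 := h.colfun1_R2 hb1
  have hR4 := h.colfun1_R2 hb2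
  rcases h.cover x with (hx | hx) | ⟨i, rfl⟩
  · rw [h.colfun_S (Or.inl hx)]
    have := h.colfun1_R1 hx
    omega
  · rw [h.colfun_S (Or.inr hx)]
    have := h.colfun1_R2 hx
    omega
  · rcases (by decide : ∀ j : Fin 6, j = 0 ∨ j = 1 ∨ j = 2 ∨ j = 3 ∨ j = 4 ∨ j = 5) i with
      rfl | rfl | rfl | rfl | rfl | rfl
    · rw [h.colfun_v0]; omega
    · rw [h.colfun_v1]; omega
    · rw [h.colfun_v2]; omega
    · rw [h.colfun_v3]; omega
    · rw [h.colfun_v4]; omega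
    · rw [h.colfun_v5]; omega

include haa hbb

theorem colfun_proper {x y : V} (hxy : G.Adj x y) :
    h.colfun a1 a2 b1 b2 x ≠ h.colfun a1 a2 b1 b2 y := by
  have hR1 := h.colfun1_R1 ha1
  have hR2 := h.colfun1_R1 ha2
  have hR3 := h.colfun1_R2 hb1
  have hR4 := h.colfun1_R2 hb2
  have hab : h.colfun1 a1 ≠ h.colfun1 a2 := fun he => haa (h.colfun1_inj1 ha1 ha2 he)
  have hbb' : h.colfun1 b1 ≠ h.colfun1 b2 := fun he => hbb (h.colfun1_inj2 hb1 hb2 he)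
  have hne := hxy.ne
  rw [h.adj_iff] at hxy
  obtain ⟨-, hy⟩ := hxy
  rcases hy with ⟨i, j, rfl, rfl, hc⟩ | ⟨hx, hy⟩ | ⟨hx, hy⟩ | ⟨hx, hy⟩ | ⟨hx, hy⟩ |
      ⟨hx, hy⟩ | ⟨hy, hx⟩ | ⟨hx, hy⟩ | ⟨hy, hx⟩
  · rcases (by decide : ∀ i j : Fin 6, c6adj i j →
        ((i = 0 ∧ j = 1) ∨ (i = 1 ∧ j = 0) ∨ (i = 1 ∧ j = 2) ∨ (i = 2 ∧ j = 1) ∨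
         (i = 2 ∧ j = 3) ∨ (i = 3 ∧ j = 2) ∨ (i = 3 ∧ j = 4) ∨ (i = 4 ∧ j = 3) ∨
         (i = 4 ∧ j = 5) ∨ (i = 5 ∧ j = 4) ∨ (i = 5 ∧ j = 0) ∨ (i = 0 ∧ j = 5))) i j hc
      with ⟨rfl, rfl⟩ | ⟨rfl, rfl⟩ | ⟨rfl, rfl⟩ | ⟨rfl, rfl⟩ | ⟨rfl, rfl⟩ | ⟨rfl, rfl⟩ |
        ⟨rfl, rfl⟩ | ⟨rfl, rfl⟩ | ⟨rfl, rfl⟩ | ⟨rfl, rfl⟩ | ⟨rfl, rfl⟩ | ⟨rfl, rfl⟩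
    · rw [h.colfun_v0, h.colfun_v1]; exact hbb'
    · rw [h.colfun_v0, h.colfun_v1]; exact hbb'.symm
    · rw [h.colfun_v1, h.colfun_v2]; omega
    · rw [h.colfun_v1, h.colfun_v2]; omega
    · rw [h.colfun_v2, h.colfun_v3]; omega
    · rw [h.colfun_v2, h.colfun_v3]; omega
    · rw [h.colfun_v3, h.colfun_v4]; exact hab
    · rw [h.colfun_v3, h.colfun_v4]; exact hab.symm
    · rw [h.colfun_v4, h.colfun_v5]; omega
    · rw [h.colfun_v4, h.colfun_v5]; omega
    · rw [h.colfun_v5, h.colfun_v0]; omega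
    · rw [h.colfun_v5, h.colfun_v0]; omega
  · rw [h.colfun_S (Or.inl hx), h.colfun_S (Or.inl hy)]
    exact fun he => hne (h.colfun1_inj1 hx hy he)
  · rw [h.colfun_S (Or.inr hx), h.colfun_S (Or.inr hy)]
    exact fun he => hne (h.colfun1_inj2 hx hy he)
  · rw [h.colfun_S (Or.inl hx), h.colfun_S (Or.inr hy)]
    have h1 := h.colfun1_R1 hx
    have h2 := h.colfun1_R2 hy
    omega
  · rw [h.colfun_S (Or.inr hx), h.colfun_S (Or.inl hy)]
    have h1 := h.colfun1_R2 hx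
    have h2 := h.colfun1_R1 hy
    omega
  · rw [h.colfun_S (Or.inl hx)]
    have h1 := h.colfun1_R1 hx
    rcases hy with rfl | rfl | rfl | rfl
    · rw [h.colfun_v0]; omega
    · rw [h.colfun_v1]; omega
    · rw [h.colfun_v2]; omega
    · rw [h.colfun_v5]; omega
  · rw [h.colfun_S (Or.inl hy)]
    have h1 := h.colfun1_R1 hy
    rcases hx with rfl | rfl | rfl | rfl
    · rw [h.colfun_v0]; omega
    · rw [h.colfun_v1]; omega
    · rw [h.colfun_v2]; omega
    · rw [h.colfun_v5]; omega
  · rw [h.colfun_S (Or.inr hx)]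
    have h1 := h.colfun1_R2 hx
    rcases hy with rfl | rfl | rfl | rfl
    · rw [h.colfun_v2]; omega
    · rw [h.colfun_v3]; omega
    · rw [h.colfun_v4]; omega
    · rw [h.colfun_v5]; omega
  · rw [h.colfun_S (Or.inr hy)]
    have h1 := h.colfun1_R2 hy
    rcases hx with rfl | rfl | rfl | rfl
    · rw [h.colfun_v2]; omega
    · rw [h.colfun_v3]; omega
    · rw [h.colfun_v4]; omega
    · rw [h.colfun_v5]; omega

end withmem

/-- The chromatic number of a graph in `H₅` with `|S₁|, |S₂| ≥ 2`. -/
theorem chrom (hcard1 : 2 ≤ h.S1.card) (hcard2 : 2 ≤ h.S2.card) :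
    G.chromaticNumber = ((h.S1.card + h.S2.card + 1 : ℕ) : ℕ∞) := by
  obtain ⟨a1, ha1, a2, ha2, haa⟩ := Finset.one_lt_card.1 (by omega : 1 < h.S1.card)
  obtain ⟨b1, hb1, b2, hb2, hbb⟩ := Finset.one_lt_card.1 (by omega : 1 < h.S2.card)
  refine le_antisymm ?_ ?_
  · have hcol : G.Colorable (h.S1.card + h.S2.card + 1) := by
      refine ⟨Coloring.mk
        (fun x => ⟨h.colfun a1 a2 b1 b2 x, h.colfun_lt ha1 ha2 hb1 hb2 x⟩) ?_⟩
      intro x y hxy he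
      exact h.colfun_proper ha1 ha2 haa hb1 hb2 hbb hxy (congrArg Fin.val he)
    exact hcol.chromaticNumber_le
  · have hclq : G.IsClique (↑h.Qset : Set V) := by
      intro x hx y hy hne
      exact h.adj_Q (Finset.mem_coe.1 hx) (Finset.mem_coe.1 hy) hne
    have := hclq.card_le_chromaticNumber
    rwa [h.card_Qset] at this

end


end H5Data

/-- for `G ∈ H₅` with `|S₁| ≥ 2` and `|S₂| ≥ 2`, `χ(G) = |S₁| + |S₂| + 1`,
and for every `ℓ > χ(G)` any two `ℓ`-colorings of `G` are joined by a path in `R_ℓ(G)`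
recoloring each vertex at most 6 times. -/
theorem stmt17 {V : Type*} [Fintype V] {G : SimpleGraph V} (h : H5Data G)
    (h1 : 2 ≤ h.S1.card) (h2 : 2 ≤ h.S2.card) :
    G.chromaticNumber = ((h.S1.card + h.S2.card + 1 : ℕ) : ℕ∞) ∧
    ∀ ℓ : ℕ, G.chromaticNumber < (ℓ : ℕ∞) →
      ∀ φ ψ : V → Fin ℓ, IsProperColoring G ℓ φ → IsProperColoring G ℓ ψ →
        ∃ m c, IsRecolorSeq G ℓ m c ∧ c 0 = φ ∧ c m = ψ ∧
          ∀ a : V, recolorCount m c a ≤ 6 := by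
  classical
  have hχ := h.chrom h1 h2
  refine ⟨hχ, ?_⟩
  intro ℓ hℓ φ ψ hφ hψ
  rw [hχ] at hℓ
  have hlt : h.S1.card + h.S2.card + 1 < ℓ := by exact_mod_cast hℓ
  obtain ⟨a1, ha1, a2, ha2, haa⟩ := Finset.one_lt_card.1 (by omega : 1 < h.S1.card)
  obtain ⟨b1, hb1, b2, hb2, hbb⟩ := Finset.one_lt_card.1 (by omega : 1 < h.S2.card)
  obtain ⟨m, cs, hseq, h0, hm, hcnt⟩ :=
    h.connect ha1 ha2 haa hb1 hb2 hbb (by omega) hφ hψ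
  exact ⟨m, cs, hseq, h0, hm, fun a => hcnt a⟩
end

section
/- In a (P₂+P₃, C₄)-free graph G containing an induced 6-cycle C = v₁...v₆, every vertex u outside C with at least one neighbor on C satisfies: N(u) ∩ C = C, or N(u) ∩ C = {vᵢ, vᵢ₊₃} for some i, or N(u) ∩ C = C \ {vᵢ₋₁, vᵢ₋₂} for some i (indices mod 6). -/
open SimpleGraph

instance (n : ℕ) [NeZero n] : DecidableRel (cyc n).Adj := fun _ _ =>
  decidable_of_iff _ (SimpleGraph.fromRel_adj _ _ _).symm

instance : DecidableRel p2p3.Adj := fun _ _ =>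
  decidable_of_iff _ (SimpleGraph.fromRel_adj _ _ _).symm

lemma cyc6_shift (i a b : Fin 6) : (cyc 6).Adj (i+a) (i+b) ↔ (cyc 6).Adj a b := by
  have key : ∀ x y : Fin 6, i + x + 1 = i + y ↔ x + 1 = y := fun x y => by
    rw [add_assoc]; exact ⟨fun h => add_left_cancel h, fun h => by rw [h]⟩
  have key2 : (i + a ≠ i + b) ↔ a ≠ b := by
    constructor
    · intro h hab; exact h (by rw [hab])
    · intro h hab; exact h (add_left_cancel hab)
  simp only [cyc, fromRel_adj, key, key2]

section rules
variable {V : Type*} (G : SimpleGraph V) (v : Fin 6 → V) (u : V)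
  (hv : Function.Injective v)
  (hC : ∀ i j, G.Adj (v i) (v j) ↔ (cyc 6).Adj i j)
  (hu : ∀ i, u ≠ v i) (i : Fin 6)

include hv hC hu

lemma ruleA (hC4 : ¬ Nonempty (cyc 4 ↪g G))
    (h0 : G.Adj u (v i)) (h2 : G.Adj u (v (i+2))) : G.Adj u (v (i+1)) := by
  by_contra h1
  apply hC4
  have hadj : ∀ a b : Fin 6, G.Adj (v (i+a)) (v (i+b)) ↔ (cyc 6).Adj a b :=
    fun a b => (hC _ _).trans (cyc6_shift i a b)
  have h0' : G.Adj u (v (i+0)) := by simpa using h0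
  refine ⟨⟨⟨![u, v (i+0), v (i+1), v (i+2)], ?_⟩, ?_⟩⟩
  · intro a b
    fin_cases a <;> fin_cases b <;> intro hab <;>
      first
        | rfl
        | exact absurd hab (hu _)
        | exact absurd hab.symm (hu _)
        | exact absurd (add_left_cancel (hv hab)) (by decide)
  · intro a b
    fin_cases a <;> fin_cases b <;>
      first
        | exact iff_of_true h0' (by decide)
        | exact iff_of_true h0'.symm (by decide)
        | exact iff_of_true h2 (by decide)
        | exact iff_of_true h2.symm (by decide)
        | exact iff_of_true ((hadj 0 1).2 (by decide)) (by decide)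
        | exact iff_of_true ((hadj 1 2).2 (by decide)) (by decide)
        | exact iff_of_true ((hadj 2 3).2 (by decide)) (by decide)
        | exact iff_of_true ((hadj 3 4).2 (by decide)) (by decide)
        | exact iff_of_true ((hadj 4 5).2 (by decide)) (by decide)
        | exact iff_of_true ((hadj 5 0).2 (by decide)) (by decide)
        | exact iff_of_true ((hadj 1 0).2 (by decide)) (by decide)
        | exact iff_of_true ((hadj 2 1).2 (by decide)) (by decide)
        | exact iff_of_true ((hadj 3 2).2 (by decide)) (by decide)
        | exact iff_of_true ((hadj 4 3).2 (by decide)) (by decide)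
        | exact iff_of_true ((hadj 5 4).2 (by decide)) (by decide)
        | exact iff_of_true ((hadj 0 5).2 (by decide)) (by decide)
        | · refine iff_of_false (fun had => ?_) (by decide)
            first
              | exact h1 had
              | exact h1 had.symm
              | exact G.irrefl had
              | (have hx := (hadj _ _).1 had; exact absurd hx (by decide))

set_option maxHeartbeats 2000000 in
lemma ruleB (hP : ¬ Nonempty (p2p3 ↪g G)) (h0 : G.Adj u (v i)) :
    G.Adj u (v (i+2)) ∨ G.Adj u (v (i+3)) ∨ G.Adj u (v (i+4)) := by
  by_contra hcon
  push_neg at hcon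
  obtain ⟨n2, n3, n4⟩ := hcon
  apply hP
  have hadj : ∀ a b : Fin 6, G.Adj (v (i+a)) (v (i+b)) ↔ (cyc 6).Adj a b :=
    fun a b => (hC _ _).trans (cyc6_shift i a b)
  have h0' : G.Adj u (v (i+0)) := by simpa using h0
  refine ⟨⟨⟨![u, v (i+0), v (i+2), v (i+3), v (i+4)], ?_⟩, ?_⟩⟩
  · intro a b
    fin_cases a <;> fin_cases b <;> intro hab <;>
      first
        | rfl
        | exact absurd hab (hu _)
        | exact absurd hab.symm (hu _)
        | exact absurd (add_left_cancel (hv hab)) (by decide)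
  · intro a b
    fin_cases a <;> fin_cases b <;>
      first
        | exact iff_of_true h0' (by decide)
        | exact iff_of_true h0'.symm (by decide)
        | exact iff_of_true ((hadj 0 1).2 (by decide)) (by decide)
        | exact iff_of_true ((hadj 1 2).2 (by decide)) (by decide)
        | exact iff_of_true ((hadj 2 3).2 (by decide)) (by decide)
        | exact iff_of_true ((hadj 3 4).2 (by decide)) (by decide)
        | exact iff_of_true ((hadj 4 5).2 (by decide)) (by decide)
        | exact iff_of_true ((hadj 5 0).2 (by decide)) (by decide)
        | exact iff_of_true ((hadj 1 0).2 (by decide)) (by decide)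
        | exact iff_of_true ((hadj 2 1).2 (by decide)) (by decide)
        | exact iff_of_true ((hadj 3 2).2 (by decide)) (by decide)
        | exact iff_of_true ((hadj 4 3).2 (by decide)) (by decide)
        | exact iff_of_true ((hadj 5 4).2 (by decide)) (by decide)
        | exact iff_of_true ((hadj 0 5).2 (by decide)) (by decide)
        | · refine iff_of_false (fun had => ?_) (by decide)
            first
              | exact n2 had
              | exact n2 had.symm
              | exact n3 had
              | exact n3 had.symm
              | exact n4 had
              | exact n4 had.symm
              | exact G.irrefl had
              | (have hx := (hadj _ _).1 had; exact absurd hx (by decide))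

set_option maxHeartbeats 2000000 in
lemma ruleC (hP : ¬ Nonempty (p2p3 ↪g G)) (h0 : G.Adj u (v i)) :
    G.Adj u (v (i+1)) ∨ G.Adj u (v (i+3)) ∨ G.Adj u (v (i+4)) := by
  by_contra hcon
  push_neg at hcon
  obtain ⟨n1, n3, n4⟩ := hcon
  apply hP
  have hadj : ∀ a b : Fin 6, G.Adj (v (i+a)) (v (i+b)) ↔ (cyc 6).Adj a b :=
    fun a b => (hC _ _).trans (cyc6_shift i a b)
  have h0' : G.Adj u (v (i+0)) := by simpa using h0
  refine ⟨⟨⟨![v (i+3), v (i+4), v (i+1), v (i+0), u], ?_⟩, ?_⟩⟩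
  · intro a b
    fin_cases a <;> fin_cases b <;> intro hab <;>
      first
        | rfl
        | exact absurd hab (hu _)
        | exact absurd hab.symm (hu _)
        | exact absurd (add_left_cancel (hv hab)) (by decide)
  · intro a b
    fin_cases a <;> fin_cases b <;>
      first
        | exact iff_of_true h0' (by decide)
        | exact iff_of_true h0'.symm (by decide)
        | exact iff_of_true ((hadj 0 1).2 (by decide)) (by decide)
        | exact iff_of_true ((hadj 1 2).2 (by decide)) (by decide)
        | exact iff_of_true ((hadj 2 3).2 (by decide)) (by decide)
        | exact iff_of_true ((hadj 3 4).2 (by decide)) (by decide)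
        | exact iff_of_true ((hadj 4 5).2 (by decide)) (by decide)
        | exact iff_of_true ((hadj 5 0).2 (by decide)) (by decide)
        | exact iff_of_true ((hadj 1 0).2 (by decide)) (by decide)
        | exact iff_of_true ((hadj 2 1).2 (by decide)) (by decide)
        | exact iff_of_true ((hadj 3 2).2 (by decide)) (by decide)
        | exact iff_of_true ((hadj 4 3).2 (by decide)) (by decide)
        | exact iff_of_true ((hadj 5 4).2 (by decide)) (by decide)
        | exact iff_of_true ((hadj 0 5).2 (by decide)) (by decide)
        | · refine iff_of_false (fun had => ?_) (by decide)
            first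
              | exact n1 had
              | exact n1 had.symm
              | exact n3 had
              | exact n3 had.symm
              | exact n4 had
              | exact n4 had.symm
              | exact G.irrefl had
              | (have hx := (hadj _ _).1 had; exact absurd hx (by decide))
end rules

lemma keyLemma : ∀ b : Fin 6 → Bool,
    (∀ i, b i = true → b (i+2) = true → b (i+1) = true) →
    (∀ i, b i = true → (b (i+2) = true ∨ b (i+3) = true ∨ b (i+4) = true)) →
    (∀ i, b i = true → (b (i+1) = true ∨ b (i+3) = true ∨ b (i+4) = true)) →
    (∃ i, b i = true) →
    (∀ j, b j = true) ∨ (∃ i : Fin 6, ∀ j, b j = true ↔ (j = i ∨ j = i+3)) ∨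
      (∃ i : Fin 6, ∀ j, b j = true ↔ (j ≠ i - 1 ∧ j ≠ i - 2)) := by decide

/-- in a `(P₂+P₃, C₄)`-free graph containing an induced 6-cycle
`v 0, …, v 5`, every vertex `u` outside the cycle with a neighbor on the cycle is adjacent
to all of the cycle, or its neighbors on the cycle are exactly `{v i, v (i+3)}` for some
`i`, or exactly `C \ {v (i-1), v (i-2)}` for some `i` (indices mod 6). -/
theorem stmt18 {V : Type*} (G : SimpleGraph V)
    (hP : ¬ Nonempty (p2p3 ↪g G)) (hC4 : ¬ Nonempty (cyc 4 ↪g G))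
    (v : Fin 6 → V) (hv : Function.Injective v)
    (hC : ∀ i j, G.Adj (v i) (v j) ↔ (cyc 6).Adj i j) :
    ∀ u : V, (∀ i, u ≠ v i) → (∃ i, G.Adj u (v i)) →
      (∀ i, G.Adj u (v i)) ∨
      (∃ i : Fin 6, ∀ j, G.Adj u (v j) ↔ (j = i ∨ j = i + 3)) ∨
      (∃ i : Fin 6, ∀ j, G.Adj u (v j) ↔ (j ≠ i - 1 ∧ j ≠ i - 2)) := by
    classical
  intro u hu hex
  set b : Fin 6 → Bool := fun j => decide (G.Adj u (v j)) with hbdef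
  have hb : ∀ j, b j = true ↔ G.Adj u (v j) := fun j => decide_eq_true_iff
  have := keyLemma b
    (fun i hi hi2 => (hb _).2 (ruleA G v u hv hC hu i hC4 ((hb _).1 hi) ((hb _).1 hi2)))
    (fun i hi => by
      rcases ruleB G v u hv hC hu i hP ((hb _).1 hi) with h | h | h
      exacts [Or.inl ((hb _).2 h), Or.inr (Or.inl ((hb _).2 h)), Or.inr (Or.inr ((hb _).2 h))])
    (fun i hi => by
      rcases ruleC G v u hv hC hu i hP ((hb _).1 hi) with h | h | h
      exacts [Or.inl ((hb _).2 h), Or.inr (Or.inl ((hb _).2 h)), Or.inr (Or.inr ((hb _).2 h))])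
    (by obtain ⟨i, hi⟩ := hex; exact ⟨i, (hb i).2 hi⟩)
  rcases this with h | ⟨i, h⟩ | ⟨i, h⟩
  · exact Or.inl fun j => (hb j).1 (h j)
  · exact Or.inr (Or.inl ⟨i, fun j => ((hb j).symm.trans (h j))⟩)
  · exact Or.inr (Or.inr ⟨i, fun j => ((hb j).symm.trans (h j))⟩)
end

section
/- For all ℓ ≥ ρ(F₂) + 2 = 5, the graph F₂ is ℓ-mixing: χ(F₂) = 3 and from any ℓ-coloring one can reach, recoloring each vertex at most twice, a 3-coloring with color classes {v₁,v₃,v₅}, {v₂,v₄,v₆}, {s₁,s₂,s₃}; hence R_ℓ(F₂) is connected with diameter at most 6·|V(F₂)|. -/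
open SimpleGraph

/-- The edges of the graph `F₂`: the 6-cycle `v₁…v₆` is `0,…,5`, and `s₁, s₂, s₃` are
`6, 7, 8`, where `s₁` is adjacent to `v₆,v₁,v₂`, `s₂` to `v₂,v₃,v₄`, `s₃` to `v₄,v₅,v₆`. -/
def f2edges : List (Fin 9 × Fin 9) :=
  [(0, 1), (1, 2), (2, 3), (3, 4), (4, 5), (5, 0),
   (6, 5), (6, 0), (6, 1), (7, 1), (7, 2), (7, 3), (8, 3), (8, 4), (8, 5)]

/-- The graph `F₂`. -/
def F2 : SimpleGraph (Fin 9) := SimpleGraph.fromRel fun a b => (a, b) ∈ f2edges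

/-- The target partition of `V(F₂)` into the color classes `{v₁,v₃,v₅}`, `{v₂,v₄,v₆}`,
`{s₁,s₂,s₃}`. -/
def f2class : Fin 9 → Fin 3 := fun i =>
  if 6 ≤ i.val then 2 else if i.val % 2 = 0 then 0 else 1

lemma properF2_iff {ℓ : ℕ} (f : Fin 9 → Fin ℓ) :
    IsProperColoring F2 ℓ f ↔ ∀ p ∈ f2edges, f p.1 ≠ f p.2 := by
  constructor
  · intro hf p hp
    refine hf ?_
    rw [F2, fromRel_adj]
    exact ⟨by fin_cases hp <;> decide, Or.inl hp⟩
  · intro h a b hab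
    rw [F2, fromRel_adj] at hab
    rcases hab with ⟨hne, h1 | h1⟩
    · exact h _ h1
    · exact (h _ h1).symm

lemma exists_ne4 {ℓ : ℕ} (hl : 5 ≤ ℓ) (a b c d : Fin ℓ) :
    ∃ q : Fin ℓ, q ≠ a ∧ q ≠ b ∧ q ≠ c ∧ q ≠ d := by
  have h4 : ({a, b, c, d} : Finset (Fin ℓ)).card ≤ 4 := by
    apply le_trans (Finset.card_insert_le _ _)
    apply Nat.succ_le_succ
    apply le_trans (Finset.card_insert_le _ _)
    apply Nat.succ_le_succ
    apply le_trans (Finset.card_insert_le _ _)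
    simp
  have : ∃ q, q ∉ ({a, b, c, d} : Finset (Fin ℓ)) := by
    by_contra hc
    push_neg at hc
    have he : ({a, b, c, d} : Finset (Fin ℓ)) = Finset.univ := Finset.eq_univ_iff_forall.mpr hc
    rw [he] at h4
    simp [Finset.card_univ] at h4
    omega
  obtain ⟨q, hq⟩ := this
  simp only [Finset.mem_insert, Finset.mem_singleton, not_or] at hq
  exact ⟨q, hq.1, hq.2.1, hq.2.2.1, hq.2.2.2⟩

lemma exists_ne5 {ℓ : ℕ} (hl : 6 ≤ ℓ) (a b c d e : Fin ℓ) :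
    ∃ q : Fin ℓ, q ≠ a ∧ q ≠ b ∧ q ≠ c ∧ q ≠ d ∧ q ≠ e := by
  have h4 : ({a, b, c, d, e} : Finset (Fin ℓ)).card ≤ 5 := by
    apply le_trans (Finset.card_insert_le _ _)
    apply Nat.succ_le_succ
    apply le_trans (Finset.card_insert_le _ _)
    apply Nat.succ_le_succ
    apply le_trans (Finset.card_insert_le _ _)
    apply Nat.succ_le_succ
    apply le_trans (Finset.card_insert_le _ _)
    simp
  have : ∃ q, q ∉ ({a, b, c, d, e} : Finset (Fin ℓ)) := by
    by_contra hc
    push_neg at hc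
    have he : ({a, b, c, d, e} : Finset (Fin ℓ)) = Finset.univ := Finset.eq_univ_iff_forall.mpr hc
    rw [he] at h4
    simp [Finset.card_univ] at h4
    omega
  obtain ⟨q, hq⟩ := this
  simp only [Finset.mem_insert, Finset.mem_singleton, not_or] at hq
  exact ⟨q, hq.1, hq.2.1, hq.2.2.1, hq.2.2.2.1, hq.2.2.2.2⟩

lemma choose_colors {ℓ : ℕ} (hl : 5 ≤ ℓ) (φ : Fin 9 → Fin ℓ) (hφ : IsProperColoring F2 ℓ φ) :
    ∃ x y q1 q2 q3 : Fin ℓ,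
      x ≠ φ 1 ∧ x ≠ φ 3 ∧ x ≠ φ 5 ∧ y ≠ x ∧
      (q1 ≠ x ∧ q1 ≠ y ∧ q1 ≠ φ 5 ∧ q1 ≠ φ 0 ∧ q1 ≠ φ 1) ∧
      (q2 ≠ x ∧ q2 ≠ y ∧ q2 ≠ φ 1 ∧ q2 ≠ φ 2 ∧ q2 ≠ φ 3) ∧
      (q3 ≠ x ∧ q3 ≠ y ∧ q3 ≠ φ 3 ∧ q3 ≠ φ 4 ∧ q3 ≠ φ 5) := by
  have E := (properF2_iff φ).mp hφ
  have h01 : φ 0 ≠ φ 1 := E (0, 1) (by decide)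
  have h12 : φ 1 ≠ φ 2 := E (1, 2) (by decide)
  have h23 : φ 2 ≠ φ 3 := E (2, 3) (by decide)
  have h34 : φ 3 ≠ φ 4 := E (3, 4) (by decide)
  have h45 : φ 4 ≠ φ 5 := E (4, 5) (by decide)
  have h50 : φ 5 ≠ φ 0 := E (5, 0) (by decide)
  have h65 : φ 6 ≠ φ 5 := E (6, 5) (by decide)
  have h60 : φ 6 ≠ φ 0 := E (6, 0) (by decide)
  have h61 : φ 6 ≠ φ 1 := E (6, 1) (by decide)
  have h71 : φ 7 ≠ φ 1 := E (7, 1) (by decide)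
  have h72 : φ 7 ≠ φ 2 := E (7, 2) (by decide)
  have h73 : φ 7 ≠ φ 3 := E (7, 3) (by decide)
  have h83 : φ 8 ≠ φ 3 := E (8, 3) (by decide)
  have h84 : φ 8 ≠ φ 4 := E (8, 4) (by decide)
  have h85 : φ 8 ≠ φ 5 := E (8, 5) (by decide)
  rcases (show 6 ≤ ℓ ∨ ℓ = 5 by omega) with h6 | h5
  · -- many colors: everything is easy
    obtain ⟨x, hx1, hx3, hx5, -⟩ := exists_ne4 hl (φ 1) (φ 3) (φ 5) (φ 5)
    obtain ⟨y, hyx, -, -, -⟩ := exists_ne4 hl x x x x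
    obtain ⟨q1, hq1⟩ := exists_ne5 h6 x y (φ 5) (φ 0) (φ 1)
    obtain ⟨q2, hq2⟩ := exists_ne5 h6 x y (φ 1) (φ 2) (φ 3)
    obtain ⟨q3, hq3⟩ := exists_ne5 h6 x y (φ 3) (φ 4) (φ 5)
    exact ⟨x, y, q1, q2, q3, hx1, hx3, hx5, hyx, hq1, hq2, hq3⟩
  · subst h5
    by_cases hA : ∃ x : Fin 5, x ≠ φ 1 ∧ x ≠ φ 3 ∧ x ≠ φ 5 ∧ x ≠ φ 6 ∧ x ≠ φ 7 ∧ x ≠ φ 8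
    · obtain ⟨x, hx1, hx3, hx5, hx6, hx7, hx8⟩ := hA
      obtain ⟨y, hyx, hy6, hy7, hy8⟩ := exists_ne4 hl x (φ 6) (φ 7) (φ 8)
      exact ⟨x, y, φ 6, φ 7, φ 8, hx1, hx3, hx5, hyx,
        ⟨hx6.symm, fun h => hy6 h.symm, h65, h60, h61⟩,
        ⟨hx7.symm, fun h => hy7 h.symm, h71, h72, h73⟩,
        ⟨hx8.symm, fun h => hy8 h.symm, h83, h84, h85⟩⟩
    · have hAx : ∀ c : Fin 5, c = φ 1 ∨ c = φ 3 ∨ c = φ 5 ∨ c = φ 6 ∨ c = φ 7 ∨ c = φ 8 := by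
        intro c
        by_contra hc
        push_neg at hc
        exact hA ⟨c, hc.1, hc.2.1, hc.2.2.1, hc.2.2.2.1, hc.2.2.2.2.1, hc.2.2.2.2.2⟩
      by_cases hb6 : φ 6 ≠ φ 1 ∧ φ 6 ≠ φ 3 ∧ φ 6 ≠ φ 5
      · -- x = φ 6
        obtain ⟨hx1, hx3, hx5⟩ := hb6
        by_cases hc8 : φ 8 ≠ φ 6 ∧ φ 8 ≠ φ 1
        · obtain ⟨q1, k1, k2, k3, k4⟩ := exists_ne4 hl (φ 6) (φ 1) (φ 5) (φ 0)
          obtain ⟨q2, m1, m2, m3, m4⟩ := exists_ne4 hl (φ 6) (φ 1) (φ 2) (φ 3)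
          exact ⟨φ 6, φ 1, q1, q2, φ 8, hx1, hx3, hx5, h61.symm,
            ⟨k1, k2, k3, k4, k2⟩, ⟨m1, m2, m2, m3, m4⟩, ⟨hc8.1, hc8.2, h83, h84, h85⟩⟩
        · have hc8' : φ 8 = φ 6 ∨ φ 8 = φ 1 := by
            by_contra hcon; push_neg at hcon; exact hc8 ⟨hcon.1, hcon.2⟩
          by_cases hc7 : φ 7 ≠ φ 6 ∧ φ 7 ≠ φ 5
          · obtain ⟨q1, k1, k2, k3, k4⟩ := exists_ne4 hl (φ 6) (φ 5) (φ 0) (φ 1)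
            obtain ⟨q3, m1, m2, m3, m4⟩ := exists_ne4 hl (φ 6) (φ 5) (φ 3) (φ 4)
            exact ⟨φ 6, φ 5, q1, φ 7, q3, hx1, hx3, hx5, h65.symm,
              ⟨k1, k2, k2, k3, k4⟩, ⟨hc7.1, hc7.2, h71, h72, h73⟩, ⟨m1, m2, m3, m4, m2⟩⟩
          · have hc7' : φ 7 = φ 6 ∨ φ 7 = φ 5 := by
              by_contra hcon; push_neg at hcon; exact hc7 ⟨hcon.1, hcon.2⟩
            have hφ4 : φ 4 = φ 1 ∨ φ 4 = φ 6 := by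
              rcases hAx (φ 4) with h | h | h | h | h | h
              · exact Or.inl h
              · exact (h34 h.symm).elim
              · exact (h45 h).elim
              · exact Or.inr h
              · rcases hc7' with h' | h'
                · exact Or.inr (h.trans h')
                · exact (h45 (h.trans h')).elim
              · rcases hc8' with h' | h'
                · exact Or.inr (h.trans h')
                · exact Or.inl (h.trans h')
            obtain ⟨q1, k1, k2, k3, k4⟩ := exists_ne4 hl (φ 6) (φ 1) (φ 5) (φ 0)
            obtain ⟨q2, m1, m2, m3, m4⟩ := exists_ne4 hl (φ 6) (φ 1) (φ 2) (φ 3)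
            obtain ⟨q3, n1, n2, n3, n4⟩ := exists_ne4 hl (φ 6) (φ 1) (φ 3) (φ 5)
            refine ⟨φ 6, φ 1, q1, q2, q3, hx1, hx3, hx5, h61.symm,
              ⟨k1, k2, k3, k4, k2⟩, ⟨m1, m2, m2, m3, m4⟩, ⟨n1, n2, n3, ?_, n4⟩⟩
            rcases hφ4 with h | h
            · rw [h]; exact n2
            · rw [h]; exact n1
      · by_cases hb7 : φ 7 ≠ φ 1 ∧ φ 7 ≠ φ 3 ∧ φ 7 ≠ φ 5
        · -- x = φ 7
          obtain ⟨hx1, hx3, hx5⟩ := hb7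
          by_cases hc8 : φ 8 ≠ φ 7 ∧ φ 8 ≠ φ 1
          · obtain ⟨q1, k1, k2, k3, k4⟩ := exists_ne4 hl (φ 7) (φ 1) (φ 5) (φ 0)
            obtain ⟨q2, m1, m2, m3, m4⟩ := exists_ne4 hl (φ 7) (φ 1) (φ 2) (φ 3)
            exact ⟨φ 7, φ 1, q1, q2, φ 8, hx1, hx3, hx5, h71.symm,
              ⟨k1, k2, k3, k4, k2⟩, ⟨m1, m2, m2, m3, m4⟩, ⟨hc8.1, hc8.2, h83, h84, h85⟩⟩
          · have hc8' : φ 8 = φ 7 ∨ φ 8 = φ 1 := by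
              by_contra hcon; push_neg at hcon; exact hc8 ⟨hcon.1, hcon.2⟩
            by_cases hc6 : φ 6 ≠ φ 7 ∧ φ 6 ≠ φ 3
            · obtain ⟨q2, m1, m2, m3, m4⟩ := exists_ne4 hl (φ 7) (φ 3) (φ 1) (φ 2)
              obtain ⟨q3, n1, n2, n3, n4⟩ := exists_ne4 hl (φ 7) (φ 3) (φ 4) (φ 5)
              exact ⟨φ 7, φ 3, φ 6, q2, q3, hx1, hx3, hx5, h73.symm,
                ⟨hc6.1, hc6.2, h65, h60, h61⟩, ⟨m1, m2, m3, m4, m2⟩, ⟨n1, n2, n2, n3, n4⟩⟩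
            · have hc6' : φ 6 = φ 7 ∨ φ 6 = φ 3 := by
                by_contra hcon; push_neg at hcon; exact hc6 ⟨hcon.1, hcon.2⟩
              have hφ4 : φ 4 = φ 1 ∨ φ 4 = φ 7 := by
                rcases hAx (φ 4) with h | h | h | h | h | h
                · exact Or.inl h
                · exact (h34 h.symm).elim
                · exact (h45 h).elim
                · rcases hc6' with h' | h'
                  · exact Or.inr (h.trans h')
                  · exact (h34 (h.trans h').symm).elim
                · exact Or.inr h
                · rcases hc8' with h' | h'
                  · exact Or.inr (h.trans h')
                  · exact Or.inl (h.trans h')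
              obtain ⟨q1, k1, k2, k3, k4⟩ := exists_ne4 hl (φ 7) (φ 1) (φ 5) (φ 0)
              obtain ⟨q2, m1, m2, m3, m4⟩ := exists_ne4 hl (φ 7) (φ 1) (φ 2) (φ 3)
              obtain ⟨q3, n1, n2, n3, n4⟩ := exists_ne4 hl (φ 7) (φ 1) (φ 3) (φ 5)
              refine ⟨φ 7, φ 1, q1, q2, q3, hx1, hx3, hx5, h71.symm,
                ⟨k1, k2, k3, k4, k2⟩, ⟨m1, m2, m2, m3, m4⟩, ⟨n1, n2, n3, ?_, n4⟩⟩
              rcases hφ4 with h | h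
              · rw [h]; exact n2
              · rw [h]; exact n1
        · by_cases hb8 : φ 8 ≠ φ 1 ∧ φ 8 ≠ φ 3 ∧ φ 8 ≠ φ 5
          · -- x = φ 8
            obtain ⟨hx1, hx3, hx5⟩ := hb8
            by_cases hc6 : φ 6 ≠ φ 8 ∧ φ 6 ≠ φ 3
            · obtain ⟨q2, m1, m2, m3, m4⟩ := exists_ne4 hl (φ 8) (φ 3) (φ 1) (φ 2)
              obtain ⟨q3, n1, n2, n3, n4⟩ := exists_ne4 hl (φ 8) (φ 3) (φ 4) (φ 5)
              exact ⟨φ 8, φ 3, φ 6, q2, q3, hx1, hx3, hx5, h83.symm,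
                ⟨hc6.1, hc6.2, h65, h60, h61⟩, ⟨m1, m2, m3, m4, m2⟩, ⟨n1, n2, n2, n3, n4⟩⟩
            · have hc6' : φ 6 = φ 8 ∨ φ 6 = φ 3 := by
                by_contra hcon; push_neg at hcon; exact hc6 ⟨hcon.1, hcon.2⟩
              by_cases hc7 : φ 7 ≠ φ 8 ∧ φ 7 ≠ φ 5
              · obtain ⟨q1, k1, k2, k3, k4⟩ := exists_ne4 hl (φ 8) (φ 5) (φ 0) (φ 1)
                obtain ⟨q3, n1, n2, n3, n4⟩ := exists_ne4 hl (φ 8) (φ 5) (φ 3) (φ 4)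
                exact ⟨φ 8, φ 5, q1, φ 7, q3, hx1, hx3, hx5, h85.symm,
                  ⟨k1, k2, k2, k3, k4⟩, ⟨hc7.1, hc7.2, h71, h72, h73⟩, ⟨n1, n2, n3, n4, n2⟩⟩
              · have hc7' : φ 7 = φ 8 ∨ φ 7 = φ 5 := by
                  by_contra hcon; push_neg at hcon; exact hc7 ⟨hcon.1, hcon.2⟩
                have hφ0 : φ 0 = φ 3 ∨ φ 0 = φ 8 := by
                  rcases hAx (φ 0) with h | h | h | h | h | h
                  · exact (h01 h).elim
                  · exact Or.inl h
                  · exact (h50 h.symm).elim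
                  · rcases hc6' with h' | h'
                    · exact Or.inr (h.trans h')
                    · exact Or.inl (h.trans h')
                  · rcases hc7' with h' | h'
                    · exact Or.inr (h.trans h')
                    · exact (h50 (h.trans h').symm).elim
                  · exact Or.inr h
                obtain ⟨q1, k1, k2, k3, k4⟩ := exists_ne4 hl (φ 8) (φ 3) (φ 5) (φ 1)
                obtain ⟨q2, m1, m2, m3, m4⟩ := exists_ne4 hl (φ 8) (φ 3) (φ 1) (φ 2)
                obtain ⟨q3, n1, n2, n3, n4⟩ := exists_ne4 hl (φ 8) (φ 3) (φ 4) (φ 5)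
                refine ⟨φ 8, φ 3, q1, q2, q3, hx1, hx3, hx5, h83.symm,
                  ⟨k1, k2, k3, ?_, k4⟩, ⟨m1, m2, m3, m4, m2⟩, ⟨n1, n2, n2, n3, n4⟩⟩
                rcases hφ0 with h | h
                · rw [h]; exact k2
                · rw [h]; exact k1
          · exfalso
            have hcov : ∀ c : Fin 5, c = φ 1 ∨ c = φ 3 ∨ c = φ 5 := by
              intro c
              have b6 : φ 6 = φ 1 ∨ φ 6 = φ 3 ∨ φ 6 = φ 5 := by
                by_contra hcon; push_neg at hcon; exact hb6 ⟨hcon.1, hcon.2.1, hcon.2.2⟩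
              have b7 : φ 7 = φ 1 ∨ φ 7 = φ 3 ∨ φ 7 = φ 5 := by
                by_contra hcon; push_neg at hcon; exact hb7 ⟨hcon.1, hcon.2.1, hcon.2.2⟩
              have b8 : φ 8 = φ 1 ∨ φ 8 = φ 3 ∨ φ 8 = φ 5 := by
                by_contra hcon; push_neg at hcon; exact hb8 ⟨hcon.1, hcon.2.1, hcon.2.2⟩
              rcases hAx c with h | h | h | h | h | h
              · exact Or.inl h
              · exact Or.inr (Or.inl h)
              · exact Or.inr (Or.inr h)
              · rcases b6 with h' | h' | h'
                · exact Or.inl (h.trans h')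
                · exact Or.inr (Or.inl (h.trans h'))
                · exact Or.inr (Or.inr (h.trans h'))
              · rcases b7 with h' | h' | h'
                · exact Or.inl (h.trans h')
                · exact Or.inr (Or.inl (h.trans h'))
                · exact Or.inr (Or.inr (h.trans h'))
              · rcases b8 with h' | h' | h'
                · exact Or.inl (h.trans h')
                · exact Or.inr (Or.inl (h.trans h'))
                · exact Or.inr (Or.inr (h.trans h'))
            have hsub : (Finset.univ : Finset (Fin 5)) ⊆ {φ 1, φ 3, φ 5} := by
              intro c _
              simpa using hcov c
            have hcard := Finset.card_le_card hsub
            have h3 : ({φ 1, φ 3, φ 5} : Finset (Fin 5)).card ≤ 3 := by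
              apply le_trans (Finset.card_insert_le _ _)
              apply Nat.succ_le_succ
              apply le_trans (Finset.card_insert_le _ _)
              simp
            simp [Finset.card_univ] at hcard
            omega

def pat {ℓ : ℕ} (x y z : Fin ℓ) : Fin 9 → Fin ℓ := fun v =>
  if v = 0 then x else if v = 1 then y else if v = 2 then x else if v = 3 then y
  else if v = 4 then x else if v = 5 then y else z

def seq1 {ℓ : ℕ} (φ : Fin 9 → Fin ℓ) (x y z q1 q2 q3 : Fin ℓ) : ℕ → Fin 9 → Fin ℓ :=
  fun i v =>
    if v = 0 then (if 4 ≤ i then x else φ 0)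
    else if v = 1 then (if 7 ≤ i then y else φ 1)
    else if v = 2 then (if 5 ≤ i then x else φ 2)
    else if v = 3 then (if 8 ≤ i then y else φ 3)
    else if v = 4 then (if 6 ≤ i then x else φ 4)
    else if v = 5 then (if 9 ≤ i then y else φ 5)
    else if v = 6 then (if 10 ≤ i then z else if 1 ≤ i then q1 else φ 6)
    else if v = 7 then (if 11 ≤ i then z else if 2 ≤ i then q2 else φ 7)
    else (if 12 ≤ i then z else if 3 ≤ i then q3 else φ 8)

lemma count_le_two {ℓ m : ℕ} (c : ℕ → Fin 9 → Fin ℓ) (a : Fin 9) (k1 k2 : ℕ)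
    (h : ∀ i < m, c i a ≠ c (i + 1) a → i = k1 ∨ i = k2) : recolorCount m c a ≤ 2 := by
  unfold recolorCount
  refine le_trans (Finset.card_le_card (fun i hi => ?_)) (?_ : ({k1, k2} : Finset ℕ).card ≤ 2)
  · simp only [Finset.mem_filter, Finset.mem_range] at hi
    simp [h i hi.1 hi.2]
  · exact (Finset.card_insert_le _ _).trans (by simp)

set_option maxHeartbeats 2000000 in
lemma reach_pat {ℓ : ℕ} (hl : 5 ≤ ℓ) (φ : Fin 9 → Fin ℓ) (hφ : IsProperColoring F2 ℓ φ) :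
    ∃ x y z : Fin ℓ, x ≠ y ∧ z ≠ x ∧ z ≠ y ∧
      ∃ c, IsRecolorSeq F2 ℓ 12 c ∧ c 0 = φ ∧ c 12 = pat x y z ∧
        ∀ a : Fin 9, recolorCount 12 c a ≤ 2 := by
  obtain ⟨x, y, q1, q2, q3, hx1, hx3, hx5, hyx,
    ⟨k1, k2, k3, k4, k5⟩, ⟨m1, m2, m3, m4, m5⟩, ⟨n1, n2, n3, n4, n5⟩⟩ :=
      choose_colors hl φ hφ
  obtain ⟨z, hzx, hzy, -, -⟩ := exists_ne4 hl x y y y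
  have E := (properF2_iff φ).mp hφ
  have h01 : φ 0 ≠ φ 1 := E (0, 1) (by decide)
  have h12 : φ 1 ≠ φ 2 := E (1, 2) (by decide)
  have h23 : φ 2 ≠ φ 3 := E (2, 3) (by decide)
  have h34 : φ 3 ≠ φ 4 := E (3, 4) (by decide)
  have h45 : φ 4 ≠ φ 5 := E (4, 5) (by decide)
  have h50 : φ 5 ≠ φ 0 := E (5, 0) (by decide)
  have h65 : φ 6 ≠ φ 5 := E (6, 5) (by decide)
  have h60 : φ 6 ≠ φ 0 := E (6, 0) (by decide)
  have h61 : φ 6 ≠ φ 1 := E (6, 1) (by decide)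
  have h71 : φ 7 ≠ φ 1 := E (7, 1) (by decide)
  have h72 : φ 7 ≠ φ 2 := E (7, 2) (by decide)
  have h73 : φ 7 ≠ φ 3 := E (7, 3) (by decide)
  have h83 : φ 8 ≠ φ 3 := E (8, 3) (by decide)
  have h84 : φ 8 ≠ φ 4 := E (8, 4) (by decide)
  have h85 : φ 8 ≠ φ 5 := E (8, 5) (by decide)
  refine ⟨x, y, z, fun h => hyx h.symm, hzx, hzy, seq1 φ x y z q1 q2 q3, ⟨?_, ?_⟩, ?_, ?_, ?_⟩
  · -- properness of every snapshot
    intro i hi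
    interval_cases i <;>
      · rw [properF2_iff]
        intro p hp
        fin_cases hp <;> simp [seq1] <;> first | assumption | (apply Ne.symm; assumption)
  · -- one vertex changes at a time
    have key : ∀ i < 12, ∀ v : Fin 9, seq1 φ x y z q1 q2 q3 i v ≠ seq1 φ x y z q1 q2 q3 (i + 1) v →
        v = (if i = 0 then 6 else if i = 1 then 7 else if i = 2 then 8 else if i = 3 then 0
          else if i = 4 then 2 else if i = 5 then 4 else if i = 6 then 1 else if i = 7 then 3
          else if i = 8 then 5 else if i = 9 then 6 else if i = 10 then 7 else 8 : Fin 9) := by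
      intro i hi v
      interval_cases i <;> fin_cases v <;> intro h <;>
        first | rfl | (exact absurd (by simp [seq1]) h)
    intro i hi a b hab hch
    by_contra hb
    have ha' := key i hi a hch
    have hb' := key i hi b hb
    exact hab (ha'.trans hb'.symm)
  · funext v
    fin_cases v <;> simp [seq1]
  · funext v
    fin_cases v <;> simp [seq1, pat]
  · intro a
    fin_cases a
    · exact count_le_two _ _ 3 3 (by intro i hi h; interval_cases i <;>
        first | omega | (exact absurd (by simp [seq1]) h))
    · exact count_le_two _ _ 6 6 (by intro i hi h; interval_cases i <;>
        first | omega | (exact absurd (by simp [seq1]) h))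
    · exact count_le_two _ _ 4 4 (by intro i hi h; interval_cases i <;>
        first | omega | (exact absurd (by simp [seq1]) h))
    · exact count_le_two _ _ 7 7 (by intro i hi h; interval_cases i <;>
        first | omega | (exact absurd (by simp [seq1]) h))
    · exact count_le_two _ _ 5 5 (by intro i hi h; interval_cases i <;>
        first | omega | (exact absurd (by simp [seq1]) h))
    · exact count_le_two _ _ 8 8 (by intro i hi h; interval_cases i <;>
        first | omega | (exact absurd (by simp [seq1]) h))
    · exact count_le_two _ _ 0 9 (by intro i hi h; interval_cases i <;>
        first | omega | (exact absurd (by simp [seq1]) h))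
    · exact count_le_two _ _ 1 10 (by intro i hi h; interval_cases i <;>
        first | omega | (exact absurd (by simp [seq1]) h))
    · exact count_le_two _ _ 2 11 (by intro i hi h; interval_cases i <;>
        first | omega | (exact absurd (by simp [seq1]) h))

def seq2 {ℓ : ℕ} (x y z x' y' z' t a : Fin ℓ) : ℕ → Fin 9 → Fin ℓ :=
  fun i v =>
    if v = 0 then (if 10 ≤ i then x' else if 4 ≤ i then a else x)
    else if v = 1 then (if 7 ≤ i then y' else y)
    else if v = 2 then (if 11 ≤ i then x' else if 5 ≤ i then a else x)
    else if v = 3 then (if 8 ≤ i then y' else y)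
    else if v = 4 then (if 12 ≤ i then x' else if 6 ≤ i then a else x)
    else if v = 5 then (if 9 ≤ i then y' else y)
    else if v = 6 then (if 13 ≤ i then z' else if 1 ≤ i then t else z)
    else if v = 7 then (if 14 ≤ i then z' else if 2 ≤ i then t else z)
    else (if 15 ≤ i then z' else if 3 ≤ i then t else z)

set_option maxHeartbeats 2000000 in
lemma bridge {ℓ : ℕ} (hl : 5 ≤ ℓ) (x y z x' y' z' : Fin ℓ)
    (hxy : x ≠ y) (hzx : z ≠ x) (hzy : z ≠ y)
    (hxy' : x' ≠ y') (hzx' : z' ≠ x') (hzy' : z' ≠ y') :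
    ∃ c, IsRecolorSeq F2 ℓ 15 c ∧ c 0 = pat x y z ∧ c 15 = pat x' y' z' := by
  obtain ⟨t, ht1, ht2, ht3, ht4⟩ := exists_ne4 hl x y x' y'
  obtain ⟨a, ha1, ha2, ha3, -⟩ := exists_ne4 hl y y' t t
  refine ⟨seq2 x y z x' y' z' t a, ⟨?_, ?_⟩, ?_, ?_⟩
  · intro i hi
    interval_cases i <;>
      · rw [properF2_iff]
        intro p hp
        fin_cases hp <;> simp [seq2] <;> first | assumption | (apply Ne.symm; assumption)
  · have key : ∀ i < 15, ∀ v : Fin 9, seq2 x y z x' y' z' t a i v ≠ seq2 x y z x' y' z' t a (i + 1) v →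
        v = (if i = 0 then 6 else if i = 1 then 7 else if i = 2 then 8 else if i = 3 then 0
          else if i = 4 then 2 else if i = 5 then 4 else if i = 6 then 1 else if i = 7 then 3
          else if i = 8 then 5 else if i = 9 then 0 else if i = 10 then 2 else if i = 11 then 4
          else if i = 12 then 6 else if i = 13 then 7 else 8 : Fin 9) := by
      intro i hi v
      interval_cases i <;> fin_cases v <;> intro h <;>
        first | rfl | (exact absurd (by simp [seq2]) h)
    intro i hi a' b hab hch
    by_contra hb
    exact hab ((key i hi a' hch).trans (key i hi b hb).symm)
  · funext v
    fin_cases v <;> simp [seq2, pat]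
  · funext v
    fin_cases v <;> simp [seq2, pat]

lemma concatSeq {V : Type*} {G : SimpleGraph V} {ℓ m m' : ℕ} {c d : ℕ → V → Fin ℓ}
    (hc : IsRecolorSeq G ℓ m c) (hd : IsRecolorSeq G ℓ m' d) (h : c m = d 0) :
    ∃ e, IsRecolorSeq G ℓ (m + m') e ∧ e 0 = c 0 ∧ e (m + m') = d m' := by
  refine ⟨fun i => if i < m then c i else d (i - m), ⟨?_, ?_⟩, ?_, ?_⟩
  · intro i hi
    by_cases hlt : i < m
    · simpa [hlt] using hc.1 i (by omega)
    · simpa [hlt] using hd.1 (i - m) (by omega)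
  · intro i hi a b hab hch
    by_cases h1 : i + 1 < m
    · have h0 : i < m := by omega
      simp only [h0, h1, if_true, if_pos] at hch ⊢
      exact hc.2 i h0 a b hab hch
    · by_cases h0 : i < m
      · have hm : m = i + 1 := by omega
        have h2 : i + 1 - m = 0 := by omega
        simp only [h0, h1, if_pos, if_neg, not_false_iff, h2] at hch ⊢
        rw [← h, hm] at hch ⊢
        exact hc.2 i (by omega) a b hab hch
      · have h1' : ¬ i + 1 < m := by omega
        have e2 : i + 1 - m = (i - m) + 1 := by omega
        simp only [h0, h1', if_neg, not_false_iff, e2] at hch ⊢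
        exact hd.2 (i - m) (by omega) a b hab hch
  · by_cases h0 : 0 < m
    · simp [h0]
    · have hm0 : m = 0 := by omega
      subst hm0
      simpa using h.symm
  · have hge : ¬ m + m' < m := by omega
    have e3 : m + m' - m = m' := by omega
    simp [hge, e3]

lemma reverseSeq {V : Type*} {G : SimpleGraph V} {ℓ m : ℕ} {c : ℕ → V → Fin ℓ}
    (hc : IsRecolorSeq G ℓ m c) :
    ∃ e, IsRecolorSeq G ℓ m e ∧ e 0 = c m ∧ e m = c 0 := by
  refine ⟨fun i => c (m - i), ⟨?_, ?_⟩, by simp, by simp⟩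
  · intro i hi
    exact hc.1 (m - i) (by omega)
  · intro i hi a b hab hch
    have e1 : m - i = m - (i + 1) + 1 := by omega
    have hch' : c (m - (i + 1)) a ≠ c (m - (i + 1) + 1) a := by
      intro hh
      exact hch (by show c (m - i) a = c (m - (i + 1)) a; rw [e1]; exact hh.symm)
    have step := hc.2 (m - (i + 1)) (by omega) a b hab hch'
    show c (m - i) b = c (m - (i + 1)) b
    rw [e1]
    exact step.symm

lemma f2_chromatic : F2.chromaticNumber = (3 : ℕ∞) := by
  have hpc : IsProperColoring F2 3 f2class := (properF2_iff f2class).mpr (by decide)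
  have hcol : F2.Colorable 3 := ⟨SimpleGraph.Coloring.mk f2class (fun hab => hpc hab)⟩
  have A05 : F2.Adj 0 5 := by rw [F2, fromRel_adj]; exact ⟨by decide, by decide⟩
  have A06 : F2.Adj 0 6 := by rw [F2, fromRel_adj]; exact ⟨by decide, by decide⟩
  have A56 : F2.Adj 5 6 := by rw [F2, fromRel_adj]; exact ⟨by decide, by decide⟩
  have hK : F2.IsClique (({0, 5, 6} : Finset (Fin 9)) : Set (Fin 9)) := by
    intro u hu v hv hne
    simp only [Finset.coe_insert, Set.mem_insert_iff, Finset.coe_singleton,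
      Set.mem_singleton_iff] at hu hv
    rcases hu with rfl | rfl | rfl <;> rcases hv with rfl | rfl | rfl <;>
      first | (exact absurd rfl hne) | assumption | (apply SimpleGraph.Adj.symm; assumption)
  have hcard3 : ({0, 5, 6} : Finset (Fin 9)).card = 3 := by decide
  have hge := hK.card_le_chromaticNumber
  rw [hcard3] at hge
  exact le_antisymm hcol.chromaticNumber_le (by exact_mod_cast hge)


/-- `χ(F₂) = 3`, and for every `ℓ ≥ ρ(F₂) + 2 = 5`: from any `ℓ`-coloring
of `F₂` one can reach, recoloring each vertex at most twice, a 3-coloring with color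
classes `{v₁,v₃,v₅}, {v₂,v₄,v₆}, {s₁,s₂,s₃}`; hence `F₂` is `ℓ`-mixing and `R_ℓ(F₂)` is
connected with diameter at most `6·|V(F₂)| = 54`. -/
theorem stmt19 :
    F2.chromaticNumber = (3 : ℕ∞) ∧
    ∀ ℓ : ℕ, 5 ≤ ℓ →
      (∀ φ : Fin 9 → Fin ℓ, IsProperColoring F2 ℓ φ →
        ∃ m c, IsRecolorSeq F2 ℓ m c ∧ c 0 = φ ∧
          (∀ a b : Fin 9, c m a = c m b ↔ f2class a = f2class b) ∧
          ∀ a : Fin 9, recolorCount m c a ≤ 2) ∧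
      (∀ φ ψ : Fin 9 → Fin ℓ, IsProperColoring F2 ℓ φ → IsProperColoring F2 ℓ ψ →
        ∃ m c, IsRecolorSeq F2 ℓ m c ∧ c 0 = φ ∧ c m = ψ ∧ m ≤ 54) := by
  refine ⟨f2_chromatic, fun ℓ hl => ⟨?_, ?_⟩⟩
  · intro φ hφ
    obtain ⟨x, y, z, hxy, hzx, hzy, c, hseq, h0, h12, hcnt⟩ := reach_pat hl φ hφ
    refine ⟨12, c, hseq, h0, ?_, hcnt⟩
    rw [h12]
    intro a b
    fin_cases a <;> fin_cases b <;>
      simp [pat, f2class] <;>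
      first | assumption | (apply Ne.symm; assumption)
  · intro φ ψ hφ hψ
    obtain ⟨x, y, z, hxy, hzx, hzy, c1, h1seq, h10, h112, -⟩ := reach_pat hl φ hφ
    obtain ⟨x', y', z', hxy', hzx', hzy', c2, h2seq, h20, h212, -⟩ := reach_pat hl ψ hψ
    obtain ⟨c3, h3seq, h30, h315⟩ := bridge hl x y z x' y' z' hxy hzx hzy hxy' hzx' hzy'
    obtain ⟨c2r, h2rseq, h2r0, h2rm⟩ := reverseSeq h2seq
    obtain ⟨e1, he1seq, he10, he1end⟩ := concatSeq h1seq h3seq (h112.trans h30.symm)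
    obtain ⟨e, heseq, he0, heend⟩ :=
      concatSeq he1seq h2rseq (he1end.trans (h315.trans ((h2r0.trans h212).symm)))
    exact ⟨12 + 15 + 12, e, heseq, he0.trans (he10.trans h10), (heend.trans h2rm).trans h20, by norm_num⟩
end
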